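/- arXiv:math/0509291 — 10 statements merged into one kernel-verified Lean document; each statement's English description precedes it below -/
import Mathlib

section
/- Let $G = N \rtimes Q$ be a semidirect product where $N$ is normal in $G$, and let $H$ be a subgroup of $N$ that is normal in $N$. Then for any $x, y \in G$ and $n \in N$, the right-coset counting map $R(g) = |H\backslash HgH|$ satisfies $R(xny) = R(xy)$ (assuming these double cosets contain finitely many right cosets). -/
open scoped Classical Pointwise

variable {G : Type*} [Group G]

/-- The double coset `HaH`. -/
def dcos (H : Subgroup G) (a : G) : Set G := DoubleCoset.doubleCoset a (H : Set G) (H : Set G)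

/-- The set of left cosets of `H` contained in `HaH`, as a subset of `G ⧸ H`. -/
def leftCosetsIn (H : Subgroup G) (a : G) : Set (G ⧸ H) := QuotientGroup.mk '' dcos H a

/-- The set of right cosets of `H` contained in `HaH`. -/
def rightCosetsIn (H : Subgroup G) (a : G) :
    Set (Quotient (QuotientGroup.rightRel H)) :=
  (fun g => Quotient.mk (QuotientGroup.rightRel H) g) '' dcos H a

/-- The right-coset counting map `R(a) = |H\HaH|`. -/
noncomputable def Rcount (H : Subgroup G) (a : G) : ℕ := Nat.card (rightCosetsIn H a)

/-- `(G,H)` is a (discrete) Hecke pair: every double coset contains finitely many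
left cosets. -/
def IsHeckePair (H : Subgroup G) : Prop := ∀ a : G, (leftCosetsIn H a).Finite

/-- In a semidirect product `G = N ⋊ Q` with `N ⊴ G`, if `H ≤ N` is normal in `N`,
then the right-coset counting map satisfies `R(xny) = R(xy)` for `n ∈ N` (assuming
the double cosets in question contain finitely many right cosets). -/
theorem stmt2 (N Q H : Subgroup G) (hNnormal : N.Normal)
    (hsd1 : N ⊓ Q = ⊥) (hsd2 : N ⊔ Q = ⊤)
    (hHN : H ≤ N) (hHnormN : ∀ n ∈ N, ∀ h ∈ H, n * h * n⁻¹ ∈ H)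
    (x y n : G) (hn : n ∈ N)
    (hfin1 : (rightCosetsIn H (x * n * y)).Finite)
    (hfin2 : (rightCosetsIn H (x * y)).Finite) :
    Rcount H (x * n * y) = Rcount H (x * y) := by

  classical
  set m := x * n * x⁻¹ with hm
  have hmN : m ∈ N := hNnormal.conj_mem n hn x
  have hxy : x * n * y = m * (x * y) := by rw [hm]; group
  -- left multiplication by m descends to right cosets
  have hrel : ∀ (c : G), ∀ a b : G, c ∈ N →
      (QuotientGroup.rightRel H).r a b → (QuotientGroup.rightRel H).r (c * a) (c * b) := by
    intro c a b hc hab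
    rw [QuotientGroup.rightRel_apply] at hab ⊢
    have : c * b * (c * a)⁻¹ = c * (b * a⁻¹) * c⁻¹ := by group
    rw [this]
    exact hHnormN c hc _ hab
  let f : Quotient (QuotientGroup.rightRel H) → Quotient (QuotientGroup.rightRel H) :=
    Quotient.map (fun g => m * g) (fun a b h => hrel m a b hmN h)
  have hfinj : Function.Injective f := by
    intro q1 q2 h
    induction q1 using Quotient.inductionOn with | h a =>
    induction q2 using Quotient.inductionOn with | h b =>
    apply Quotient.sound
    have h' : (QuotientGroup.rightRel H).r (m * a) (m * b) := Quotient.exact h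
    have := hrel m⁻¹ (m * a) (m * b) (N.inv_mem hmN) h'
    simpa using this
  -- dcos image
  have himg : (fun g => m * g) '' dcos H (x * y) = dcos H (x * n * y) := by
    ext g
    simp only [Set.mem_image, dcos, DoubleCoset.mem_doubleCoset]
    constructor
    · rintro ⟨g', ⟨h1, hh1, h2, hh2, rfl⟩, rfl⟩
      refine ⟨m * h1 * m⁻¹, hHnormN m hmN h1 hh1, h2, hh2, ?_⟩
      rw [hxy]; group
    · rintro ⟨h1, hh1, h2, hh2, rfl⟩
      refine ⟨m⁻¹ * h1 * m * (x * y) * h2, ⟨m⁻¹ * h1 * m, by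
        have := hHnormN m⁻¹ (N.inv_mem hmN) h1 hh1; simpa using this, h2, hh2, rfl⟩, ?_⟩
      rw [hxy]; group
  have hset : rightCosetsIn H (x * n * y) = f '' rightCosetsIn H (x * y) := by
    unfold rightCosetsIn
    rw [← himg, ← Set.image_comp, ← Set.image_comp]
    rfl
  rw [Rcount, Rcount, hset, Nat.card_image_of_injective hfinj]
end

section
/- Let $(G,H)$ be a discrete Hecke pair and $a, b \in G$ with $HaHbH = HabH$. Then in the Hecke algebra, $[HaH] \cdot [HbH] = \frac{R(a)R(b)}{R(ab)} [HabH]$, where $R(g) = |H\backslash HgH|$. -/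
open scoped Classical Pointwise

variable {G : Type*} [Group G]

namespace HPAux

abbrev QR (H : Subgroup G) := Quotient (QuotientGroup.rightRel H)

def mkR (H : Subgroup G) (g : G) : QR H := Quotient.mk (QuotientGroup.rightRel H) g

variable {H : Subgroup G}

lemma mem_dcos {g x : G} :
    x ∈ dcos H g ↔ ∃ h1 ∈ (H : Set G), ∃ h2 ∈ (H : Set G), x = h1 * g * h2 := DoubleCoset.mem_doubleCoset

lemma self_mem_dcos (g : G) : g ∈ dcos H g := DoubleCoset.mem_doubleCoset_self H H g

lemma hmul_mem_dcos {h x g : G} (hh : h ∈ H) (hx : x ∈ dcos H g) : h * x ∈ dcos H g := by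
  obtain ⟨p, hp, q, hq, rfl⟩ := mem_dcos.1 hx
  exact mem_dcos.2 ⟨h * p, H.mul_mem hh hp, q, hq, by group⟩

lemma mem_dcos_hmul {h x g : G} (hh : h ∈ H) (hx : x ∈ dcos H g) : x * h ∈ dcos H g := by
  obtain ⟨p, hp, q, hq, rfl⟩ := mem_dcos.1 hx
  exact mem_dcos.2 ⟨p, hp, q * h, H.mul_mem hq hh, by group⟩

lemma inv_mem_dcos {x g : G} (hx : x ∈ dcos H g) : x⁻¹ ∈ dcos H g⁻¹ := by
  obtain ⟨p, hp, q, hq, rfl⟩ := mem_dcos.1 hx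
  exact mem_dcos.2 ⟨q⁻¹, H.inv_mem hq, p⁻¹, H.inv_mem hp, by group⟩

lemma dcos_eq_of_mem {x g : G} (hx : x ∈ dcos H g) : dcos H x = dcos H g :=
  DoubleCoset.doubleCoset_eq_of_mem hx

lemma mkR_eq_mkR {x y : G} : mkR H x = mkR H y ↔ y * x⁻¹ ∈ H := by
  rw [mkR, mkR, Quotient.eq]
  exact QuotientGroup.rightRel_apply

lemma mkR_hmul {h : G} (hh : h ∈ H) (g : G) : mkR H (h * g) = mkR H g := by
  refine mkR_eq_mkR.2 ?_
  have : g * (h * g)⁻¹ = h⁻¹ := by group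
  rw [this]; exact H.inv_mem hh

lemma mkL_mulh {h : G} (hh : h ∈ H) (g : G) :
    (QuotientGroup.mk (g * h) : G ⧸ H) = QuotientGroup.mk g := by
  refine QuotientGroup.eq.2 ?_
  have : (g * h)⁻¹ * g = h⁻¹ := by group
  rw [this]; exact H.inv_mem hh

lemma out_mkR (g : G) : ∃ h ∈ H, (mkR H g).out = h * g := by
  have h1 : mkR H (mkR H g).out = mkR H g := Quotient.out_eq _
  have h2 : g * (mkR H g).out⁻¹ ∈ H := mkR_eq_mkR.mp h1
  exact ⟨(g * (mkR H g).out⁻¹)⁻¹, H.inv_mem h2, by group⟩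

lemma out_mkL (g : G) : ∃ h ∈ H, (QuotientGroup.mk g : G ⧸ H).out = g * h := by
  have h1 : (QuotientGroup.mk ((QuotientGroup.mk g : G ⧸ H).out) : G ⧸ H) = QuotientGroup.mk g :=
    QuotientGroup.out_eq' _
  have h2 := QuotientGroup.eq.mp h1
  exact ⟨((QuotientGroup.mk g : G ⧸ H).out⁻¹ * g)⁻¹, H.inv_mem h2, by group⟩

lemma mkR_out_eq (E : QR H) : mkR H E.out = E := Quotient.out_eq E

lemma mkR_mem_rightCosetsIn {x g : G} (hx : x ∈ dcos H g) : mkR H x ∈ rightCosetsIn H g :=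
  ⟨x, hx, rfl⟩

lemma out_mem_of_rightCosetsIn {g : G} {E : QR H} (hE : E ∈ rightCosetsIn H g) :
    E.out ∈ dcos H g := by
  obtain ⟨y, hy, rfl⟩ := hE
  obtain ⟨h, hh, hout⟩ := out_mkR (H := H) y
  show (mkR H y).out ∈ dcos H g
  rw [hout]
  exact hmul_mem_dcos hh hy

lemma rightCosetsIn_finite (hH : IsHeckePair H) (g : G) : (rightCosetsIn H g).Finite := by
  refine ((hH g⁻¹).image (fun C : G ⧸ H => mkR H C.out⁻¹)).subset ?_
  rintro E ⟨y, hy, rfl⟩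
  refine ⟨QuotientGroup.mk y⁻¹, ⟨y⁻¹, inv_mem_dcos hy, rfl⟩, ?_⟩
  obtain ⟨k, hk, hout⟩ := out_mkL (H := H) y⁻¹
  show mkR H ((QuotientGroup.mk y⁻¹ : G ⧸ H).out)⁻¹ = mkR H y
  rw [hout, mul_inv_rev, inv_inv]
  exact mkR_hmul (H.inv_mem hk) y

lemma rcount_pos (hH : IsHeckePair H) (g : G) : 0 < Rcount H g := by
  have hfin := rightCosetsIn_finite hH g
  rw [Rcount, Nat.card_coe_set_eq]
  exact (Set.ncard_pos hfin).2 ⟨mkR H g, mkR_mem_rightCosetsIn (self_mem_dcos g)⟩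



lemma key_card (hH : IsHeckePair H) (a b x : G)
    (hab : dcos H a * dcos H b = dcos H (a * b)) (hx : x ∈ dcos H (a * b)) :
    Rcount H a * Rcount H b =
      Rcount H (a * b) *
        Nat.card {c : G ⧸ H | Quotient.out c ∈ dcos H a ∧ (Quotient.out c)⁻¹ * x ∈ dcos H b} := by
  classical
  set S : Set (G ⧸ H) :=
    {c : G ⧸ H | Quotient.out c ∈ dcos H a ∧ (Quotient.out c)⁻¹ * x ∈ dcos H b} with hSdef
  have hxab : dcos H x = dcos H (a * b) := dcos_eq_of_mem hx
  -- choice of writing elements of HxH as h1 * x * h2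
  have hch : ∀ g : G, ∃ h1, h1 ∈ H ∧ ∃ h2, h2 ∈ H ∧ (g ∈ dcos H x → g = h1 * x * h2) := by
    intro g
    by_cases hg : g ∈ dcos H x
    · obtain ⟨p, hp, q, hq, hgeq⟩ := mem_dcos.1 hg
      exact ⟨p, hp, q, hq, fun _ => hgeq⟩
    · exact ⟨1, H.one_mem, 1, H.one_mem, fun h => absurd h hg⟩
  choose e1 he1 e2 he2 hsp using hch
  -- basic membership facts
  have hcd : ∀ c d : G, c ∈ dcos H a → d ∈ dcos H b → c * d ∈ dcos H (a * b) := by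
    intro c d hc hd
    rw [← hab]; exact Set.mul_mem_mul hc hd
  have houtmem : ∀ c d : G, c ∈ dcos H a → d ∈ dcos H b →
      (mkR H (c * d)).out ∈ dcos H x := by
    intro c d hc hd
    rw [hxab]
    exact out_mem_of_rightCosetsIn (mkR_mem_rightCosetsIn (hcd c d hc hd))
  -- the w-element entering the second component of the forward map
  have hsmem : ∀ c d : G, c ∈ dcos H a → d ∈ dcos H b →
      (QuotientGroup.mk ((e1 ((mkR H (c * d)).out))⁻¹ * (mkR H (c * d)).out * d⁻¹) : G ⧸ H)
        ∈ S := by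
    intro c d hc hd
    obtain ⟨m, hm, hmeq⟩ := out_mkR (H := H) (c * d)
    have hex := houtmem c d hc hd
    have hspe := hsp ((mkR H (c * d)).out) hex
    set e : G := (mkR H (c * d)).out with he_def
    set α : G := e1 e with hα_def
    set β : G := e2 e with hβ_def
    obtain ⟨k, hk, hkeq⟩ := out_mkL (H := H) (α⁻¹ * e * d⁻¹)
    constructor
    · -- out ∈ dcos H a
      rw [hkeq]
      have h1 : α⁻¹ * e * d⁻¹ = α⁻¹ * (m * c) := by rw [hmeq]; group
      rw [h1]
      exact mem_dcos_hmul hk (hmul_mem_dcos (H.inv_mem (he1 e)) (hmul_mem_dcos hm hc))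
    · -- out⁻¹ * x ∈ dcos H b
      rw [hkeq]
      have h2 : (α⁻¹ * e * d⁻¹ * k)⁻¹ * x = k⁻¹ * (d * β⁻¹) := by
        rw [hspe]; group
      rw [h2]
      exact hmul_mem_dcos (H.inv_mem hk) (mem_dcos_hmul (H.inv_mem (he2 e)) hd)
  -- recovery identities
  have recoverD : ∀ c d : G,
      mkR H (((QuotientGroup.mk ((e1 ((mkR H (c * d)).out))⁻¹ * (mkR H (c * d)).out * d⁻¹) :
          G ⧸ H)).out⁻¹ * (e1 ((mkR H (c * d)).out))⁻¹ * (mkR H (c * d)).out) = mkR H d := by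
    intro c d
    set e : G := (mkR H (c * d)).out with he_def
    set α : G := e1 e with hα_def
    obtain ⟨k, hk, hkeq⟩ := out_mkL (H := H) (α⁻¹ * e * d⁻¹)
    rw [hkeq]
    have h1 : (α⁻¹ * e * d⁻¹ * k)⁻¹ * α⁻¹ * e = k⁻¹ * d := by group
    rw [h1]
    exact mkR_hmul (H.inv_mem hk) d
  have recoverC : ∀ c d : G, mkR H ((mkR H (c * d)).out * d⁻¹) = mkR H c := by
    intro c d
    obtain ⟨m, hm, hmeq⟩ := out_mkR (H := H) (c * d)
    rw [hmeq]
    have h1 : m * (c * d) * d⁻¹ = m * c := by group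
    rw [h1]
    exact mkR_hmul hm c
  -- the forward map
  set f : ↥(rightCosetsIn H a) × ↥(rightCosetsIn H b) → ↥(rightCosetsIn H (a * b)) × ↥S :=
    fun p =>
      (⟨mkR H ((p.1 : QR H).out * (p.2 : QR H).out),
         mkR_mem_rightCosetsIn
           (hcd _ _ (out_mem_of_rightCosetsIn p.1.2) (out_mem_of_rightCosetsIn p.2.2))⟩,
       ⟨QuotientGroup.mk ((e1 ((mkR H ((p.1 : QR H).out * (p.2 : QR H).out)).out))⁻¹ *
           (mkR H ((p.1 : QR H).out * (p.2 : QR H).out)).out * ((p.2 : QR H).out)⁻¹),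
         hsmem _ _ (out_mem_of_rightCosetsIn p.1.2) (out_mem_of_rightCosetsIn p.2.2)⟩)
    with hfdef
  have hinj : Function.Injective f := by
    intro p q hpq
    simp only [hfdef, Prod.mk.injEq, Subtype.mk.injEq] at hpq
    obtain ⟨hE, hs⟩ := hpq
    have hD : (p.2 : QR H) = (q.2 : QR H) := by
      rw [← mkR_out_eq (p.2 : QR H), ← mkR_out_eq (q.2 : QR H),
        ← recoverD ((p.1 : QR H).out) ((p.2 : QR H).out),
        ← recoverD ((q.1 : QR H).out) ((q.2 : QR H).out), hs, hE]
    have hDout : (p.2 : QR H).out = (q.2 : QR H).out := by rw [hD]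
    have hC : (p.1 : QR H) = (q.1 : QR H) := by
      rw [← mkR_out_eq (p.1 : QR H), ← mkR_out_eq (q.1 : QR H),
        ← recoverC ((p.1 : QR H).out) ((p.2 : QR H).out),
        ← recoverC ((q.1 : QR H).out) ((q.2 : QR H).out), hE, hDout]
    exact Prod.ext_iff.mpr ⟨Subtype.ext hC, Subtype.ext hD⟩
  have hsurj : Function.Surjective f := by
    rintro ⟨E, s⟩
    have heab : (E : QR H).out ∈ dcos H (a * b) := out_mem_of_rightCosetsIn E.2
    have hex : (E : QR H).out ∈ dcos H x := by rw [hxab]; exact heab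
    have hspe := hsp _ hex
    have hcsa : Quotient.out (s : G ⧸ H) ∈ dcos H a := s.2.1
    have hcsx : (Quotient.out (s : G ⧸ H))⁻¹ * x ∈ dcos H b := s.2.2
    set e : G := (E : QR H).out with he_def
    set α : G := e1 e with hα_def
    set β : G := e2 e with hβ_def
    set cs : G := Quotient.out (s : G ⧸ H) with hcs_def
    have hd0 : cs⁻¹ * α⁻¹ * e ∈ dcos H b := by
      have h1 : cs⁻¹ * α⁻¹ * e = (cs⁻¹ * x) * β := by rw [hspe]; group
      rw [h1]
      exact mem_dcos_hmul (he2 e) hcsx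
    obtain ⟨n, hn, hneq⟩ := out_mkR (H := H) (cs⁻¹ * α⁻¹ * e)
    have hc0 : e * ((mkR H (cs⁻¹ * α⁻¹ * e)).out)⁻¹ ∈ dcos H a := by
      rw [hneq]
      have h2 : e * (n * (cs⁻¹ * α⁻¹ * e))⁻¹ = α * (cs * n⁻¹) := by group
      rw [h2]
      exact hmul_mem_dcos (he1 e) (mem_dcos_hmul (H.inv_mem hn) hcsa)
    have hfirst : mkR H ((mkR H (e * ((mkR H (cs⁻¹ * α⁻¹ * e)).out)⁻¹)).out *
        (mkR H (cs⁻¹ * α⁻¹ * e)).out) = (E : QR H) := by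
      obtain ⟨m, hm, hmeq⟩ := out_mkR (H := H) (e * ((mkR H (cs⁻¹ * α⁻¹ * e)).out)⁻¹)
      rw [hmeq]
      have h3 : m * (e * ((mkR H (cs⁻¹ * α⁻¹ * e)).out)⁻¹) * (mkR H (cs⁻¹ * α⁻¹ * e)).out
          = m * e := by group
      rw [h3, mkR_hmul hm, he_def]
      exact mkR_out_eq _
    refine ⟨(⟨mkR H (e * ((mkR H (cs⁻¹ * α⁻¹ * e)).out)⁻¹), mkR_mem_rightCosetsIn hc0⟩,
            ⟨mkR H (cs⁻¹ * α⁻¹ * e), mkR_mem_rightCosetsIn hd0⟩), ?_⟩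
    refine Prod.ext_iff.mpr ⟨Subtype.ext ?_, Subtype.ext ?_⟩
    · simp only [hfdef]
      exact hfirst
    · simp only [hfdef]
      rw [hfirst, ← he_def, ← hα_def, hneq]
      have h4 : α⁻¹ * e * (n * (cs⁻¹ * α⁻¹ * e))⁻¹ = cs * n⁻¹ := by group
      rw [h4, mkL_mulh (H.inv_mem hn) cs, hcs_def]
      exact QuotientGroup.out_eq' _
  calc Rcount H a * Rcount H b
      = Nat.card (↥(rightCosetsIn H a) × ↥(rightCosetsIn H b)) := (Nat.card_prod _ _).symm
    _ = Nat.card (↥(rightCosetsIn H (a * b)) × ↥S) :=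
        Nat.card_congr (Equiv.ofBijective f ⟨hinj, hsurj⟩)
    _ = Rcount H (a * b) * Nat.card ↥S := Nat.card_prod _ _

lemma finsum_indicator_eq_card (hSfin :
    {c : G ⧸ H | Quotient.out c ∈ dcos H a ∧ (Quotient.out c)⁻¹ * x ∈ dcos H b}.Finite) :
    (∑ᶠ c : G ⧸ H,
        if Quotient.out c ∈ dcos H a ∧ (Quotient.out c)⁻¹ * x ∈ dcos H b then (1 : ℂ) else 0)
      = (Nat.card {c : G ⧸ H | Quotient.out c ∈ dcos H a ∧ (Quotient.out c)⁻¹ * x ∈ dcos H b}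
          : ℂ) := by
  classical
  set S : Set (G ⧸ H) :=
    {c : G ⧸ H | Quotient.out c ∈ dcos H a ∧ (Quotient.out c)⁻¹ * x ∈ dcos H b} with hSdef
  have hsupp : (Function.support fun c : G ⧸ H =>
      if Quotient.out c ∈ dcos H a ∧ (Quotient.out c)⁻¹ * x ∈ dcos H b then (1 : ℂ) else 0)
      ⊆ ↑hSfin.toFinset := by
    intro c hc
    rw [Function.mem_support] at hc
    by_contra hcn
    apply hc
    rw [if_neg]
    intro hmem
    exact hcn (hSfin.mem_toFinset.mpr hmem)
  rw [finsum_eq_finset_sum_of_support_subset _ hsupp]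
  calc (∑ c ∈ hSfin.toFinset,
        if Quotient.out c ∈ dcos H a ∧ (Quotient.out c)⁻¹ * x ∈ dcos H b then (1 : ℂ) else 0)
      = ∑ c ∈ hSfin.toFinset, (1 : ℂ) :=
        Finset.sum_congr rfl (fun c hc => if_pos (hSfin.mem_toFinset.mp hc))
    _ = (hSfin.toFinset.card : ℂ) := by rw [Finset.sum_const, nsmul_eq_mul, mul_one]
    _ = (Nat.card S : ℂ) := by
        rw [Nat.card_coe_set_eq, Set.ncard_eq_toFinset_card _ hSfin]

end HPAux

/-- If `(G,H)` is a discrete Hecke pair and `HaHbH = HabH`, then in the Hecke algebra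
`[HaH]⋅[HbH] = (R(a)R(b)/R(ab))⋅[HabH]`, where `R(g) = |H\HgH|`.  The product is
expressed pointwise by its convolution formula. -/
theorem stmt4 (H : Subgroup G) (hHecke : IsHeckePair H) (a b : G)
    (hab : dcos H a * dcos H b = dcos H (a * b)) :
    ∀ x : G,
      (∑ᶠ c : G ⧸ H,
          if Quotient.out c ∈ dcos H a ∧ (Quotient.out c)⁻¹ * x ∈ dcos H b then (1 : ℂ) else 0)
        = ((Rcount H a : ℂ) * (Rcount H b : ℂ) / (Rcount H (a * b) : ℂ)) *
            (if x ∈ dcos H (a * b) then 1 else 0) := by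
  classical
  intro x
  by_cases hx : x ∈ dcos H (a * b)
  · have hSfin : {c : G ⧸ H | Quotient.out c ∈ dcos H a ∧ (Quotient.out c)⁻¹ * x ∈ dcos H b}.Finite :=
      (hHecke a).subset (fun c hc => ⟨Quotient.out c, hc.1, QuotientGroup.out_eq' c⟩)
    rw [HPAux.finsum_indicator_eq_card hSfin, if_pos hx, mul_one]
    have hkey := HPAux.key_card hHecke a b x hab hx
    have hne : (Rcount H (a * b) : ℂ) ≠ 0 :=
      Nat.cast_ne_zero.mpr (HPAux.rcount_pos hHecke (a * b)).ne'
    rw [eq_div_iff hne]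
    exact_mod_cast congrArg (Nat.cast : ℕ → ℂ)
      (by rw [mul_comm (Rcount H (a * b))] at hkey; exact hkey.symm)
  · have h0 : ∀ c : G ⧸ H,
        (if Quotient.out c ∈ dcos H a ∧ (Quotient.out c)⁻¹ * x ∈ dcos H b then (1 : ℂ) else 0)
          = 0 := by
      intro c
      rw [if_neg]
      rintro ⟨h1, h2⟩
      apply hx
      have hm := Set.mul_mem_mul h1 h2
      rw [hab] at hm
      simpa [mul_assoc, mul_inv_cancel_left] using hm
    rw [if_neg hx, mul_zero]
    simp only [h0]
    exact finsum_zero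
end

section
/- Let $(G,H)$ be a discrete Hecke pair and let $(\nu, V)$ be a matrix unit pair on a Hilbert space $\mathcal{H}$ satisfying condition (i): $V([HaH])\nu(\epsilon_{xH}) = \sum_{uH \subseteq Ha^{-1}H} \nu(\epsilon_{xuH}) V([HaH]) \nu(\epsilon_{xH})$ for all $a,x \in G$. Then $\|V([HaH])|_{\nu(\epsilon_{xH})\mathcal{H}}\| \leq R(a)^{1/2}$ for all $a,x \in G$, where $R(a) = |H\backslash HaH|$; in fact $\|V([HaH])h\|^2 = R(a)\|h\|^2$ for $h \in \nu(\epsilon_{xH})\mathcal{H}$. -/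
open scoped Classical Pointwise

variable {G : Type*} [Group G]

lemma dcos_inv_mem {H : Subgroup G} {a g : G} (hg : g ∈ dcos H a) : g⁻¹ ∈ dcos H a⁻¹ := by
  obtain ⟨h, hh, k, hk, rfl⟩ := DoubleCoset.mem_doubleCoset.1 hg
  exact DoubleCoset.mem_doubleCoset.2 ⟨k⁻¹, H.inv_mem hk, h⁻¹, H.inv_mem hh, by group⟩

lemma dcos_mul_mem {H : Subgroup G} {a g : G} (hg : g ∈ dcos H a) {h : G} (hh : h ∈ H) :
    g * h ∈ dcos H a := by
  obtain ⟨p, hp, q, hq, rfl⟩ := DoubleCoset.mem_doubleCoset.1 hg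
  exact DoubleCoset.mem_doubleCoset.2 ⟨p, hp, q * h, H.mul_mem hq hh, by group⟩

lemma out_mem_dcos_iff {H : Subgroup G} {a : G} (d : G ⧸ H) :
    Quotient.out d ∈ dcos H a ↔ d ∈ leftCosetsIn H a := by
  constructor
  · intro h; exact ⟨_, h, Quotient.out_eq d⟩
  · rintro ⟨g, hg, hgd⟩
    have hmem : g⁻¹ * Quotient.out d ∈ H := by
      rw [← QuotientGroup.eq]
      rw [hgd]; exact (Quotient.out_eq d).symm
    have := dcos_mul_mem hg hmem
    simpa [mul_assoc] using this

lemma card_S_eq {H : Subgroup G} (a : G) :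
    Nat.card {d : G ⧸ H | Quotient.out d ∈ dcos H a⁻¹} = Rcount H a := by
  apply Nat.card_eq_of_bijective
    (fun d : {d : G ⧸ H // Quotient.out d ∈ dcos H a⁻¹} =>
      (⟨Quotient.mk (QuotientGroup.rightRel H) (Quotient.out d.1)⁻¹,
        ⟨(Quotient.out d.1)⁻¹, by simpa using dcos_inv_mem d.2, rfl⟩⟩ : rightCosetsIn H a))
  constructor
  · rintro ⟨d, hd⟩ ⟨d', hd'⟩ hdd
    apply Subtype.ext; replace hdd := congrArg Subtype.val hdd; dsimp only at hdd ⊢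
    have h1 : (Quotient.out d')⁻¹ * ((Quotient.out d)⁻¹)⁻¹ ∈ H :=
      QuotientGroup.rightRel_apply.mp (Quotient.exact hdd)
    have h2 : (Quotient.out d)⁻¹ * Quotient.out d' ∈ H := by
      simpa using H.inv_mem h1
    have : (d : G ⧸ H) = d' := by
      rw [← Quotient.out_eq d, ← Quotient.out_eq d', QuotientGroup.eq]
      exact h2
    exact this
  · rintro ⟨q, g, hg, rfl⟩
    obtain ⟨h, hh⟩ := QuotientGroup.mk_out_eq_mul H g⁻¹
    refine ⟨⟨QuotientGroup.mk g⁻¹, ?_⟩, ?_⟩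
    · rw [hh]
      exact dcos_mul_mem (dcos_inv_mem hg) h.2
    · refine Subtype.ext ?_; dsimp only
      rw [hh]
      exact Quotient.sound (QuotientGroup.rightRel_apply.mpr (by simpa using h.2))


variable {E : Type*} [NormedAddCommGroup E] [InnerProductSpace ℂ E] [CompleteSpace E]

local notation "⟪" a ", " b "⟫" => inner (𝕜 := ℂ) a b

/-- If `(ν, V)` is a matrix unit pair for the discrete Hecke pair `(G,H)` satisfying
`V([HaH])ν(ε_{xH}) = ∑_{uH ⊆ Ha⁻¹H} ν(ε_{xuH}) V([HaH]) ν(ε_{xH})`, then for every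
`ξ` in the range of the projection `ν(ε_{xH})` one has `‖V([HaH])ξ‖² = R(a)‖ξ‖²`;
in particular `‖V([HaH])|_{ν(ε_{xH})ℋ}‖ ≤ R(a)^{1/2}`. -/
theorem stmt8 (H : Subgroup G) (hHecke : IsHeckePair H)
    (ν : G ⧸ H → E →L[ℂ] E) (V : G → E →L[ℂ] E)
    (hν_sa : ∀ c, IsSelfAdjoint (ν c)) (hν_idem : ∀ c, ν c * ν c = ν c)
    (hν_orth : ∀ c d, c ≠ d → ν c * ν d = 0)
    (hν_nd : (⨆ c : G ⧸ H, LinearMap.range (ν c : E →ₗ[ℂ] E)).topologicalClosure = ⊤)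
    (hV_class : ∀ a b : G, b ∈ dcos H a → V b = V a)
    (hV_one : V 1 = 1) (hV_star : ∀ a : G, star (V a) = V a⁻¹)
    (hV_mul : ∀ a b : G, V a * V b =
      ∑ᶠ c : DoubleCoset.Quotient (H : Set G) (H : Set G),
        (Nat.card ↥{d : G ⧸ H | Quotient.out d ∈ dcos H a ∧
            (Quotient.out d)⁻¹ * Quotient.out c ∈ dcos H b} : ℂ) • V (Quotient.out c))
    -- `(ν, V)` is a matrix unit pair:
    (hmu_star : ∀ x y : G,
      star (ν (QuotientGroup.mk x) * V (x⁻¹ * y) * ν (QuotientGroup.mk y)) =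
        ν (QuotientGroup.mk y) * V (y⁻¹ * x) * ν (QuotientGroup.mk x))
    (hmu_mul : ∀ x y w z : G,
      (ν (QuotientGroup.mk x) * V (x⁻¹ * y) * ν (QuotientGroup.mk y)) *
          (ν (QuotientGroup.mk w) * V (w⁻¹ * z) * ν (QuotientGroup.mk z)) =
        if (QuotientGroup.mk w : G ⧸ H) = QuotientGroup.mk y then
          ν (QuotientGroup.mk x) * V (x⁻¹ * z) * ν (QuotientGroup.mk z)
        else 0)
    -- condition (i):
    (hcond : ∀ a x : G,
      V a * ν (QuotientGroup.mk x) =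
        ∑ᶠ d : G ⧸ H,
          if Quotient.out d ∈ dcos H a⁻¹ then
            ν (QuotientGroup.mk (x * Quotient.out d)) * V a * ν (QuotientGroup.mk x)
          else 0) :
    ∀ (a x : G) (ξ : E), ν (QuotientGroup.mk x) ξ = ξ →
      ‖V a ξ‖ ^ 2 = (Rcount H a : ℝ) * ‖ξ‖ ^ 2 ∧
      ‖V a ξ‖ ≤ Real.sqrt (Rcount H a) * ‖ξ‖ := by
  
  intro a x ξ hξ
  set S : Set (G ⧸ H) := {d | Quotient.out d ∈ dcos H a⁻¹} with hSdef
  have hSfin : S.Finite := by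
    have hS : S = leftCosetsIn H a⁻¹ := Set.ext fun d => out_mem_dcos_iff d
    rw [hS]; exact hHecke a⁻¹
  set M : G ⧸ H → (E →L[ℂ] E) := fun d =>
    ν (QuotientGroup.mk (x * Quotient.out d)) * V a * ν (QuotientGroup.mk x) with hMdef
  -- Step 1: V a ξ is the finite sum of the M d ξ.
  have hVξ : V a ξ = ∑ d ∈ hSfin.toFinset, (M d) ξ := by
    have h1 : V a ξ = (V a * ν (QuotientGroup.mk x)) ξ := by
      simp [ContinuousLinearMap.mul_apply, hξ]
    rw [h1, hcond a x,
      finsum_eq_sum_of_support_subset _ (s := hSfin.toFinset) ?_]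
    · rw [ContinuousLinearMap.sum_apply]
      refine Finset.sum_congr rfl fun d hd => ?_
      have hP : Quotient.out d ∈ dcos H a⁻¹ := hSfin.mem_toFinset.mp hd
      rw [if_pos hP]
    · intro d hd
      rw [Function.mem_support] at hd
      rw [Set.Finite.coe_toFinset]
      by_contra h
      exact hd (if_neg h)
  -- matrix unit computation
  have hMM : ∀ d ∈ S, ∀ d' ∈ S,
      star (M d) * M d' = if d' = d then ν (QuotientGroup.mk x) else 0 := by
    intro d hd d' hd'
    have key : ∀ e ∈ S, M e =
        ν (QuotientGroup.mk (x * Quotient.out e)) * V ((x * Quotient.out e)⁻¹ * x) *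
          ν (QuotientGroup.mk x) := by
      intro e he
      have hu : (Quotient.out e)⁻¹ ∈ dcos H a := by simpa using dcos_inv_mem he
      have hVe : V ((x * Quotient.out e)⁻¹ * x) = V a := by
        have heq : (x * Quotient.out e)⁻¹ * x = (Quotient.out e)⁻¹ := by group
        rw [heq]; exact hV_class a _ hu
      rw [hMdef]; simp only [hVe]
    rw [key d hd, key d' hd', hmu_star (x * Quotient.out d) x,
      hmu_mul x (x * Quotient.out d) (x * Quotient.out d') x]
    have hcongr : ((QuotientGroup.mk (x * Quotient.out d') : G ⧸ H) =
        QuotientGroup.mk (x * Quotient.out d)) ↔ d' = d := by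
      rw [QuotientGroup.eq]
      constructor
      · intro h
        have h2 : (Quotient.out d')⁻¹ * Quotient.out d ∈ H := by
          have : (x * Quotient.out d')⁻¹ * (x * Quotient.out d) =
            (Quotient.out d')⁻¹ * Quotient.out d := by group
          rwa [this] at h
        rw [← Quotient.out_eq d', ← Quotient.out_eq d, QuotientGroup.eq]
        exact h2
      · rintro rfl
        have : (x * Quotient.out d')⁻¹ * (x * Quotient.out d') = 1 := by group
        rw [this]; exact H.one_mem
    by_cases hdd : d' = d
    · rw [if_pos ((hcongr).mpr hdd), if_pos hdd]
      rw [inv_mul_cancel, hV_one, mul_one, hν_idem]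
    · rw [if_neg (fun h => hdd (hcongr.mp h)), if_neg hdd]
  -- inner products
  have hinner : ∀ d ∈ S, ∀ d' ∈ S,
      ⟪(M d) ξ, (M d') ξ⟫ = if d' = d then ((‖ξ‖ : ℂ) ^ 2) else 0 := by
    intro d hd d' hd'
    have hadj : ⟪(M d) ξ, (M d') ξ⟫ = ⟪ξ, (star (M d) * M d') ξ⟫ := by
      rw [ContinuousLinearMap.mul_apply, ContinuousLinearMap.star_eq_adjoint]
      exact (ContinuousLinearMap.adjoint_inner_right (M d) ξ ((M d') ξ)).symm
    rw [hadj, hMM d hd d' hd']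
    by_cases hdd : d' = d
    · rw [if_pos hdd, if_pos hdd, hξ, inner_self_eq_norm_sq_to_K]
      norm_cast
    · rw [if_neg hdd, if_neg hdd]
      simp
  -- norm computation
  have hcard : (hSfin.toFinset.card : ℝ) = (Rcount H a : ℝ) := by
    have h1 : Nat.card S = hSfin.toFinset.card := by
      rw [Nat.card_coe_set_eq, Set.ncard_eq_toFinset_card _ hSfin]
    have h2 : Nat.card S = Rcount H a := card_S_eq a
    rw [← h1, h2]
  have hmain : ‖V a ξ‖ ^ 2 = (Rcount H a : ℝ) * ‖ξ‖ ^ 2 := by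
    have hCinner : ⟪V a ξ, V a ξ⟫ = (hSfin.toFinset.card : ℂ) * (‖ξ‖ : ℂ) ^ 2 := by
      rw [hVξ, sum_inner]
      have : ∀ d ∈ hSfin.toFinset,
          ⟪(M d) ξ, ∑ d' ∈ hSfin.toFinset, (M d') ξ⟫ = ((‖ξ‖ : ℂ) ^ 2) := by
        intro d hd
        rw [inner_sum]
        have hrw : ∀ d' ∈ hSfin.toFinset,
            ⟪(M d) ξ, (M d') ξ⟫ = if d' = d then ((‖ξ‖ : ℂ) ^ 2) else 0 :=
          fun d' hd' => hinner d (hSfin.mem_toFinset.mp hd) d' (hSfin.mem_toFinset.mp hd')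
        rw [Finset.sum_congr rfl hrw, Finset.sum_ite_eq' hSfin.toFinset d fun _ => (‖ξ‖ : ℂ) ^ 2,
          if_pos hd]
      rw [Finset.sum_congr rfl this, Finset.sum_const, nsmul_eq_mul]
    have h3 : ‖(V a) ξ‖ ^ 2 = (hSfin.toFinset.card : ℝ) * ‖ξ‖ ^ 2 := by
      have hK := inner_self_eq_norm_sq_to_K (𝕜 := ℂ) ((V a) ξ)
      rw [hCinner] at hK
      have hre := congrArg Complex.re hK.symm
      simpa [pow_two, Complex.mul_re] using hre
    rw [h3, hcard]
  refine ⟨hmain, ?_⟩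
  have hnn : ‖V a ξ‖ = Real.sqrt ((Rcount H a : ℝ) * ‖ξ‖ ^ 2) := by
    rw [← hmain, Real.sqrt_sq (norm_nonneg _)]
  rw [hnn, Real.sqrt_mul (by positivity), Real.sqrt_sq (norm_nonneg _)]
end

section
/- Let $(G,H)$ be a discrete Hecke pair. If $(\nu, V)$ is a covariant pair, then the operators $\upsilon_{xH,yH} = \nu(\epsilon_{xH}) V([Hx^{-1}yH]) \nu(\epsilon_{yH})$ satisfy $\upsilon_{xH,yH}\,\upsilon_{yH,zH} = \upsilon_{xH,zH}$ for all $x,y,z \in G$; i.e., every covariant pair is a matrix unit pair. -/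
open scoped Classical Pointwise

variable {G : Type*} [Group G]

variable {E : Type*} [NormedAddCommGroup E] [InnerProductSpace ℂ E] [CompleteSpace E]

private lemma mem_dcos {H : Subgroup G} {a g : G} (h₁ h₂ : G) (hh₁ : h₁ ∈ H)
    (hh₂ : h₂ ∈ H) (hg : g = h₁ * a * h₂) : g ∈ dcos H a :=
  DoubleCoset.mem_doubleCoset.mpr ⟨h₁, hh₁, h₂, hh₂, hg⟩

private lemma out_mk_spec (H : Subgroup G) (g : G) :
    ∃ h ∈ H, (Quotient.out (QuotientGroup.mk g : G ⧸ H)) = g * h := by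
  refine ⟨g⁻¹ * Quotient.out (QuotientGroup.mk g : G ⧸ H), ?_, by group⟩
  rw [← QuotientGroup.eq]
  exact (Quotient.out_eq (QuotientGroup.mk g : G ⧸ H)).symm

/-- Key collapse lemma: the first matrix-unit relation. -/
private lemma key (H : Subgroup G) (hHecke : IsHeckePair H)
    (ν : G ⧸ H → E →L[ℂ] E) (V : G → E →L[ℂ] E)
    (hν_idem : ∀ c, ν c * ν c = ν c)
    (hν_orth : ∀ c d, c ≠ d → ν c * ν d = 0)
    (hV_class : ∀ a b : G, b ∈ dcos H a → V b = V a)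
    (hcov : ∀ a x b : G,
      V a * ν (QuotientGroup.mk x) * V b =
        ∑ᶠ p : (G ⧸ H) × (G ⧸ H),
          if Quotient.out p.1 ∈ dcos H a⁻¹ ∧ Quotient.out p.2 ∈ dcos H b then
            ν (QuotientGroup.mk (x * Quotient.out p.1)) *
              V ((Quotient.out p.1)⁻¹ * Quotient.out p.2) *
              ν (QuotientGroup.mk (x * Quotient.out p.2))
          else 0) (x y z : G) :
    (ν (QuotientGroup.mk x) * V (x⁻¹ * y) * ν (QuotientGroup.mk y)) *
        (ν (QuotientGroup.mk y) * V (y⁻¹ * z) * ν (QuotientGroup.mk z)) =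
      ν (QuotientGroup.mk x) * V (x⁻¹ * z) * ν (QuotientGroup.mk z) := by
  set f : (G ⧸ H) × (G ⧸ H) → E →L[ℂ] E := fun p =>
    if Quotient.out p.1 ∈ dcos H (x⁻¹ * y)⁻¹ ∧ Quotient.out p.2 ∈ dcos H (y⁻¹ * z) then
      ν (QuotientGroup.mk (y * Quotient.out p.1)) *
        V ((Quotient.out p.1)⁻¹ * Quotient.out p.2) *
        ν (QuotientGroup.mk (y * Quotient.out p.2))
    else 0 with hf
  have huv : V (x⁻¹ * y) * ν (QuotientGroup.mk y) * V (y⁻¹ * z) = ∑ᶠ p, f p :=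
    hcov (x⁻¹ * y) y (y⁻¹ * z)
  -- finiteness of the support
  have hfin : (Function.support f).Finite := by
    apply Set.Finite.subset (Set.Finite.prod (hHecke (x⁻¹ * y)⁻¹) (hHecke (y⁻¹ * z)))
    intro p hp
    rw [Function.mem_support] at hp
    simp only [hf] at hp
    split_ifs at hp with hc
    · exact ⟨⟨Quotient.out p.1, hc.1, Quotient.out_eq p.1⟩,
        ⟨Quotient.out p.2, hc.2, Quotient.out_eq p.2⟩⟩
    · exact absurd rfl hp
  have hfin2 : (Function.support fun p => ν (QuotientGroup.mk x) * f p).Finite := by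
    apply hfin.subset
    intro p hp
    rw [Function.mem_support] at hp ⊢
    intro h0; exact hp (by rw [h0, mul_zero])
  -- reduce LHS
  have hidem := hν_idem (QuotientGroup.mk y : G ⧸ H)
  have step1 : (ν (QuotientGroup.mk x) * V (x⁻¹ * y) * ν (QuotientGroup.mk y)) *
      (ν (QuotientGroup.mk y) * V (y⁻¹ * z) * ν (QuotientGroup.mk z)) =
      ν (QuotientGroup.mk x) * (V (x⁻¹ * y) * ν (QuotientGroup.mk y) * V (y⁻¹ * z)) *
        ν (QuotientGroup.mk z) := by
    calc (ν (QuotientGroup.mk x) * V (x⁻¹ * y) * ν (QuotientGroup.mk y)) *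
        (ν (QuotientGroup.mk y) * V (y⁻¹ * z) * ν (QuotientGroup.mk z))
        = ν (QuotientGroup.mk x) * V (x⁻¹ * y) *
            (ν (QuotientGroup.mk y) * ν (QuotientGroup.mk y)) *
            V (y⁻¹ * z) * ν (QuotientGroup.mk z) := by simp only [mul_assoc]
      _ = _ := by rw [hidem]; simp only [mul_assoc]
  rw [step1, huv, mul_finsum' _ _ hfin, finsum_mul' _ _ hfin2]
  -- collapse the sum to the single point p₀
  set p₀ : (G ⧸ H) × (G ⧸ H) := (QuotientGroup.mk (y⁻¹ * x), QuotientGroup.mk (y⁻¹ * z))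
    with hp₀
  obtain ⟨h₁, hh₁, hu⟩ := out_mk_spec H (y⁻¹ * x)
  obtain ⟨h₂, hh₂, hv⟩ := out_mk_spec H (y⁻¹ * z)
  rw [finsum_eq_single _ p₀]
  · -- value at p₀
    have hcond : Quotient.out p₀.1 ∈ dcos H (x⁻¹ * y)⁻¹ ∧
        Quotient.out p₀.2 ∈ dcos H (y⁻¹ * z) := by
      constructor
      · exact mem_dcos 1 h₁ H.one_mem hh₁ (by rw [hu]; group)
      · exact mem_dcos 1 h₂ H.one_mem hh₂ (by rw [hv]; group)
    simp only [hf]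
    rw [if_pos hcond]
    have e1 : (QuotientGroup.mk (y * Quotient.out p₀.1) : G ⧸ H) = QuotientGroup.mk x := by
      rw [QuotientGroup.eq, hu]
      have hg : (y * (y⁻¹ * x * h₁))⁻¹ * x = h₁⁻¹ := by group
      rw [hg]; exact H.inv_mem hh₁
    have e2 : (QuotientGroup.mk (y * Quotient.out p₀.2) : G ⧸ H) = QuotientGroup.mk z := by
      rw [QuotientGroup.eq, hv]
      have hg : (y * (y⁻¹ * z * h₂))⁻¹ * z = h₂⁻¹ := by group
      rw [hg]; exact H.inv_mem hh₂
    have e3 : V ((Quotient.out p₀.1)⁻¹ * Quotient.out p₀.2) = V (x⁻¹ * z) := by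
      apply hV_class
      exact mem_dcos h₁⁻¹ h₂ (H.inv_mem hh₁) hh₂ (by rw [hu, hv]; group)
    rw [e1, e2, e3]
    calc ν (QuotientGroup.mk x) *
          (ν (QuotientGroup.mk x) * V (x⁻¹ * z) * ν (QuotientGroup.mk z)) *
          ν (QuotientGroup.mk z)
        = (ν (QuotientGroup.mk x) * ν (QuotientGroup.mk x)) * V (x⁻¹ * z) *
            (ν (QuotientGroup.mk z) * ν (QuotientGroup.mk z)) := by simp only [mul_assoc]
      _ = _ := by rw [hν_idem, hν_idem]
  · -- vanishing away from p₀
    intro p hp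
    simp only [hf]
    split_ifs with hc
    · have hne : p.1 ≠ QuotientGroup.mk (y⁻¹ * x) ∨ p.2 ≠ QuotientGroup.mk (y⁻¹ * z) := by
        by_contra hcon
        push_neg at hcon
        exact hp (Prod.ext hcon.1 hcon.2)
      rcases hne with h1 | h1
      · have hne2 : (QuotientGroup.mk x : G ⧸ H) ≠ QuotientGroup.mk (y * Quotient.out p.1) := by
          intro he
          apply h1
          rw [QuotientGroup.eq] at he
          rw [← Quotient.out_eq p.1, QuotientGroup.eq]
          have hgrp : (Quotient.out p.1)⁻¹ * (y⁻¹ * x) = (x⁻¹ * (y * Quotient.out p.1))⁻¹ := by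
            group
          rw [hgrp]
          exact H.inv_mem he
        have h0 := hν_orth _ _ hne2
        calc ν (QuotientGroup.mk x) *
              (ν (QuotientGroup.mk (y * Quotient.out p.1)) *
                V ((Quotient.out p.1)⁻¹ * Quotient.out p.2) *
                ν (QuotientGroup.mk (y * Quotient.out p.2))) * ν (QuotientGroup.mk z)
            = (ν (QuotientGroup.mk x) * ν (QuotientGroup.mk (y * Quotient.out p.1))) *
                (V ((Quotient.out p.1)⁻¹ * Quotient.out p.2) *
                  (ν (QuotientGroup.mk (y * Quotient.out p.2)) * ν (QuotientGroup.mk z))) := by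
              simp only [mul_assoc]
          _ = 0 := by rw [h0, zero_mul]
      · have hne2 : (QuotientGroup.mk (y * Quotient.out p.2) : G ⧸ H) ≠ QuotientGroup.mk z := by
          intro he
          apply h1
          rw [QuotientGroup.eq] at he
          rw [← Quotient.out_eq p.2, QuotientGroup.eq]
          have hgrp : (Quotient.out p.2)⁻¹ * (y⁻¹ * z) = (y * Quotient.out p.2)⁻¹ * z := by
            group
          rw [hgrp]
          exact he
        have h0 := hν_orth _ _ hne2
        calc ν (QuotientGroup.mk x) *
              (ν (QuotientGroup.mk (y * Quotient.out p.1)) *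
                V ((Quotient.out p.1)⁻¹ * Quotient.out p.2) *
                ν (QuotientGroup.mk (y * Quotient.out p.2))) * ν (QuotientGroup.mk z)
            = (ν (QuotientGroup.mk x) * ν (QuotientGroup.mk (y * Quotient.out p.1)) *
                V ((Quotient.out p.1)⁻¹ * Quotient.out p.2)) *
                (ν (QuotientGroup.mk (y * Quotient.out p.2)) * ν (QuotientGroup.mk z)) := by
              simp only [mul_assoc]
          _ = 0 := by rw [h0, mul_zero]
    · simp

/-- If `(ν, V)` is a covariant pair for the discrete Hecke pair `(G,H)`, then the
operators `υ_{xH,yH} = ν(ε_{xH}) V([Hx⁻¹yH]) ν(ε_{yH})` satisfy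
`υ_{xH,yH} υ_{yH,zH} = υ_{xH,zH}`; i.e. every covariant pair is a matrix unit pair. -/
theorem stmt9 (H : Subgroup G) (hHecke : IsHeckePair H)
    (ν : G ⧸ H → E →L[ℂ] E) (V : G → E →L[ℂ] E)
    (hν_sa : ∀ c, IsSelfAdjoint (ν c)) (hν_idem : ∀ c, ν c * ν c = ν c)
    (hν_orth : ∀ c d, c ≠ d → ν c * ν d = 0)
    (hν_nd : (⨆ c : G ⧸ H, LinearMap.range (ν c : E →ₗ[ℂ] E)).topologicalClosure = ⊤)
    (hV_class : ∀ a b : G, b ∈ dcos H a → V b = V a)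
    (hV_one : V 1 = 1) (hV_star : ∀ a : G, star (V a) = V a⁻¹)
    (hV_mul : ∀ a b : G, V a * V b =
      ∑ᶠ c : DoubleCoset.Quotient (H : Set G) (H : Set G),
        (Nat.card ↥{d : G ⧸ H | Quotient.out d ∈ dcos H a ∧
            (Quotient.out d)⁻¹ * Quotient.out c ∈ dcos H b} : ℂ) • V (Quotient.out c))
    -- `(ν, V)` is a covariant pair:
    (hcov : ∀ a x b : G,
      V a * ν (QuotientGroup.mk x) * V b =
        ∑ᶠ p : (G ⧸ H) × (G ⧸ H),
          if Quotient.out p.1 ∈ dcos H a⁻¹ ∧ Quotient.out p.2 ∈ dcos H b then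
            ν (QuotientGroup.mk (x * Quotient.out p.1)) *
              V ((Quotient.out p.1)⁻¹ * Quotient.out p.2) *
              ν (QuotientGroup.mk (x * Quotient.out p.2))
          else 0) :
    (∀ x y z : G,
      (ν (QuotientGroup.mk x) * V (x⁻¹ * y) * ν (QuotientGroup.mk y)) *
          (ν (QuotientGroup.mk y) * V (y⁻¹ * z) * ν (QuotientGroup.mk z)) =
        ν (QuotientGroup.mk x) * V (x⁻¹ * z) * ν (QuotientGroup.mk z)) ∧
    (∀ x y : G,
      star (ν (QuotientGroup.mk x) * V (x⁻¹ * y) * ν (QuotientGroup.mk y)) =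
        ν (QuotientGroup.mk y) * V (y⁻¹ * x) * ν (QuotientGroup.mk x)) ∧
    (∀ x y w z : G,
      (ν (QuotientGroup.mk x) * V (x⁻¹ * y) * ν (QuotientGroup.mk y)) *
          (ν (QuotientGroup.mk w) * V (w⁻¹ * z) * ν (QuotientGroup.mk z)) =
        if (QuotientGroup.mk w : G ⧸ H) = QuotientGroup.mk y then
          ν (QuotientGroup.mk x) * V (x⁻¹ * z) * ν (QuotientGroup.mk z)
        else 0) := by
  refine ⟨fun x y z => key H hHecke ν V hν_idem hν_orth hV_class hcov x y z, ?_, ?_⟩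
  · intro x y
    rw [star_mul, star_mul, (hν_sa _).star_eq, (hν_sa _).star_eq, hV_star,
      show (x⁻¹ * y)⁻¹ = y⁻¹ * x by group, mul_assoc]
  · intro x y w z
    split_ifs with hw
    · have hV : V (w⁻¹ * z) = V (y⁻¹ * z) := by
        apply hV_class
        rw [QuotientGroup.eq] at hw
        exact mem_dcos (w⁻¹ * y) 1 hw H.one_mem (by group)
      rw [hw, hV]
      exact key H hHecke ν V hν_idem hν_orth hV_class hcov x y z
    · have h0 : ν (QuotientGroup.mk y : G ⧸ H) * ν (QuotientGroup.mk w) = 0 :=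
        hν_orth _ _ (fun h => hw h.symm)
      calc (ν (QuotientGroup.mk x) * V (x⁻¹ * y) * ν (QuotientGroup.mk y)) *
          (ν (QuotientGroup.mk w) * V (w⁻¹ * z) * ν (QuotientGroup.mk z))
          = ν (QuotientGroup.mk x) * V (x⁻¹ * y) *
              (ν (QuotientGroup.mk y) * ν (QuotientGroup.mk w)) *
              (V (w⁻¹ * z) * ν (QuotientGroup.mk z)) := by simp only [mul_assoc]
        _ = 0 := by rw [h0, mul_zero, zero_mul]
end

section
/- Let $(G,H)$ be a discrete Hecke pair, and let $M$ and $\rho$ be the representations of $c_0(G/H)$ and $\mathcal{H}(G,H)$ on $\ell^2(G/H)$ given by $M(f)\epsilon_{yH} = f(yH)\epsilon_{yH}$ and $\rho([HaH])\epsilon_{yH} = \sum_{uH \subseteq Ha^{-1}H} \epsilon_{yuH}$. Then for all $x, y \in G$: $M(\epsilon_{xH})\,\rho([Hx^{-1}yH])\,M(\epsilon_{yH}) = \epsilon_{xH} \otimes \overline{\epsilon_{yH}}$, the rank-one operator $\zeta \mapsto \langle \zeta, \epsilon_{yH}\rangle \epsilon_{xH}$. In particular $(M,\rho)$ is a matrix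 unit pair. -/
open scoped Classical Pointwise

variable {G : Type*} [Group G]

set_option maxHeartbeats 1000000

/-- For the multiplication representation `M` and right-convolution representation `ρ`
of a discrete Hecke pair `(G,H)` on `ℓ²(G/H)` (characterised by
`M(ε_{cH})ε_{dH} = [d = c] ε_{dH}` and `ρ([HaH])ε_{yH} = ∑_{uH ⊆ Ha⁻¹H} ε_{yuH}`),
one has `M(ε_{xH}) ρ([Hx⁻¹yH]) M(ε_{yH}) = ε_{xH} ⊗ \bar{ε_{yH}}`, the rank-one
operator `ζ ↦ (ζ|ε_{yH}) ε_{xH}`.  In particular `(M, ρ)` is a matrix unit pair. -/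
theorem stmt11 (H : Subgroup G) (hHecke : IsHeckePair H)
    (Mop : G ⧸ H → lp (fun _ : G ⧸ H => ℂ) 2 →L[ℂ] lp (fun _ : G ⧸ H => ℂ) 2)
    (ρop : G → lp (fun _ : G ⧸ H => ℂ) 2 →L[ℂ] lp (fun _ : G ⧸ H => ℂ) 2)
    (hM : ∀ c d : G ⧸ H,
      Mop c (lp.single 2 d 1) = if d = c then lp.single 2 d 1 else 0)
    (hρ : ∀ (a : G) (d : G ⧸ H),
      ρop a (lp.single 2 d 1) =
        ∑ᶠ u : G ⧸ H,
          if Quotient.out u ∈ dcos H a⁻¹ then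
            lp.single 2 (QuotientGroup.mk (Quotient.out d * Quotient.out u)) 1
          else 0) :
    (∀ (x y : G) (ζ : lp (fun _ : G ⧸ H => ℂ) 2),
      (Mop (QuotientGroup.mk x) * ρop (x⁻¹ * y) * Mop (QuotientGroup.mk y)) ζ =
        (inner ℂ (lp.single 2 (QuotientGroup.mk y : G ⧸ H) (1 : ℂ)) ζ : ℂ) •
          lp.single 2 (QuotientGroup.mk x : G ⧸ H) (1 : ℂ)) ∧
    (∀ x y : G,
      star (Mop (QuotientGroup.mk x) * ρop (x⁻¹ * y) * Mop (QuotientGroup.mk y)) =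
        Mop (QuotientGroup.mk y) * ρop (y⁻¹ * x) * Mop (QuotientGroup.mk x)) ∧
    (∀ x y w z : G,
      (Mop (QuotientGroup.mk x) * ρop (x⁻¹ * y) * Mop (QuotientGroup.mk y)) *
          (Mop (QuotientGroup.mk w) * ρop (w⁻¹ * z) * Mop (QuotientGroup.mk z)) =
        if (QuotientGroup.mk w : G ⧸ H) = QuotientGroup.mk y then
          Mop (QuotientGroup.mk x) * ρop (x⁻¹ * z) * Mop (QuotientGroup.mk z)
        else 0) := by
  -- Part 1: the pointwise rank-one formula.
  have key : ∀ (x y : G) (ζ : lp (fun _ : G ⧸ H => ℂ) 2),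
      (Mop (QuotientGroup.mk x) * ρop (x⁻¹ * y) * Mop (QuotientGroup.mk y)) ζ =
        (inner ℂ (lp.single 2 (QuotientGroup.mk y : G ⧸ H) (1 : ℂ)) ζ : ℂ) •
          lp.single 2 (QuotientGroup.mk x : G ⧸ H) (1 : ℂ) := by
    intro x y ζ
    set a : G := x⁻¹ * y with ha
    have ha' : a⁻¹ = y⁻¹ * x := by rw [ha]; group
    set T := Mop (QuotientGroup.mk x) * ρop a * Mop (QuotientGroup.mk y) with hT
    set yo : G := Quotient.out (QuotientGroup.mk y : G ⧸ H) with hyo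
    have hyoH : y⁻¹ * yo ∈ H := by
      have := QuotientGroup.out_eq' (QuotientGroup.mk y : G ⧸ H)
      exact (QuotientGroup.eq (s := H)).mp this.symm
    set u₀ : G ⧸ H := QuotientGroup.mk (yo⁻¹ * x) with hu₀
    have hu₀H : (yo⁻¹ * x)⁻¹ * Quotient.out u₀ ∈ H := by
      have := QuotientGroup.out_eq' u₀
      exact (QuotientGroup.eq (s := H)).mp this.symm
    -- the set of relevant cosets is finite
    have hSfin : ({u : G ⧸ H | Quotient.out u ∈ dcos H a⁻¹}).Finite := by
      refine (hHecke a⁻¹).subset ?_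
      intro u hu
      exact ⟨Quotient.out u, hu, QuotientGroup.out_eq' u⟩
    -- action on basis vectors
    have hbasis : ∀ d : G ⧸ H,
        T (lp.single 2 d 1) =
          if d = (QuotientGroup.mk y : G ⧸ H) then
            lp.single 2 (QuotientGroup.mk x : G ⧸ H) (1 : ℂ) else 0 := by
      intro d
      rw [hT, ContinuousLinearMap.mul_apply, ContinuousLinearMap.mul_apply, hM]
      by_cases hd : d = (QuotientGroup.mk y : G ⧸ H)
      · rw [if_pos hd, if_pos hd, hd, hρ]
        have hsupp : (Function.support fun u : G ⧸ H =>
            if Quotient.out u ∈ dcos H a⁻¹ then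
              lp.single 2 ((QuotientGroup.mk
                (Quotient.out (QuotientGroup.mk y : G ⧸ H) * Quotient.out u)) : G ⧸ H) (1 : ℂ)
            else (0 : lp (fun _ : G ⧸ H => ℂ) 2)) ⊆ ↑hSfin.toFinset := by
          intro u hu
          simp only [Set.Finite.coe_toFinset, Set.mem_setOf_eq]
          by_contra hcon
          exact hu (if_neg hcon)
        rw [finsum_eq_finset_sum_of_support_subset _ hsupp, map_sum, ← hyo]
        have hu₀dcos : Quotient.out u₀ ∈ dcos H a⁻¹ := by
          rw [ha']
          refine DoubleCoset.mem_doubleCoset.mpr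
            ⟨yo⁻¹ * y, ?_, (yo⁻¹ * x)⁻¹ * Quotient.out u₀, hu₀H, by group⟩
          · have := H.inv_mem hyoH
            simpa using this
        have hu₀mem : u₀ ∈ hSfin.toFinset := by
          rw [Set.Finite.mem_toFinset]
          exact hu₀dcos
        have hterm : ∀ u : G ⧸ H,
            Mop (QuotientGroup.mk x)
              (if Quotient.out u ∈ dcos H a⁻¹ then
                lp.single 2 (QuotientGroup.mk (yo * Quotient.out u)) (1 : ℂ) else 0) =
            if u = u₀ then lp.single 2 (QuotientGroup.mk x : G ⧸ H) (1 : ℂ) else 0 := by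
          intro u
          by_cases hu : Quotient.out u ∈ dcos H a⁻¹
          · rw [if_pos hu, hM]
            by_cases hmk : (QuotientGroup.mk (yo * Quotient.out u) : G ⧸ H) =
                QuotientGroup.mk x
            · rw [if_pos hmk]
              have huu₀ : u = u₀ := by
                have h1 : (yo * Quotient.out u)⁻¹ * x ∈ H :=
                  (QuotientGroup.eq (s := H)).mp hmk
                have h2 : (Quotient.out u)⁻¹ * (yo⁻¹ * x) ∈ H := by
                  have : (yo * Quotient.out u)⁻¹ * x =
                      (Quotient.out u)⁻¹ * (yo⁻¹ * x) := by group
                  rwa [this] at h1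
                calc u = QuotientGroup.mk (Quotient.out u) :=
                      (QuotientGroup.out_eq' u).symm
                  _ = u₀ := (QuotientGroup.eq (s := H)).mpr h2
              rw [if_pos huu₀, hmk]
            · rw [if_neg hmk]
              have huu₀ : ¬ u = u₀ := by
                intro hcon
                apply hmk
                refine (QuotientGroup.eq (s := H)).mpr ?_
                have : (yo * Quotient.out u)⁻¹ * x =
                    ((yo⁻¹ * x)⁻¹ * Quotient.out u)⁻¹ := by group
                rw [this, hcon]
                exact H.inv_mem hu₀H
              rw [if_neg huu₀]
          · rw [if_neg hu, map_zero]
            have hne : ¬ u = u₀ := fun hcon => hu (by rw [hcon]; exact hu₀dcos)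
            rw [if_neg hne]
        rw [Finset.sum_congr rfl (fun u _ => hterm u), Finset.sum_ite_eq' _ u₀, if_pos hu₀mem]
      · rw [if_neg hd, map_zero, map_zero, if_neg hd]
    -- extend to all of ℓ² by continuity
    have hsum : HasSum (fun d : G ⧸ H => lp.single 2 d (ζ d)) ζ :=
      lp.hasSum_single ENNReal.ofNat_ne_top ζ
    have hsum2 : HasSum (fun d : G ⧸ H => T (lp.single 2 d (ζ d))) (T ζ) :=
      hsum.mapL T
    have hfun : (fun d : G ⧸ H => T (lp.single 2 d (ζ d))) =
        fun d : G ⧸ H => if d = (QuotientGroup.mk y : G ⧸ H) then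
          ζ (QuotientGroup.mk y : G ⧸ H) •
            lp.single 2 (QuotientGroup.mk x : G ⧸ H) (1 : ℂ) else 0 := by
      funext d
      have : lp.single (E := fun _ : G ⧸ H => ℂ) 2 d (ζ d) = ζ d • lp.single 2 d 1 := by
        rw [← lp.single_smul]
        norm_num
      rw [this, map_smul, hbasis d]
      by_cases hd : d = (QuotientGroup.mk y : G ⧸ H)
      · rw [if_pos hd, if_pos hd, hd]
      · rw [if_neg hd, if_neg hd, smul_zero]
    rw [hfun] at hsum2
    have hsum3 : HasSum (fun d : G ⧸ H => if d = (QuotientGroup.mk y : G ⧸ H) then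
        ζ (QuotientGroup.mk y : G ⧸ H) •
          (lp.single 2 (QuotientGroup.mk x : G ⧸ H) (1 : ℂ) :
            lp (fun _ : G ⧸ H => ℂ) 2) else 0)
        (ζ (QuotientGroup.mk y : G ⧸ H) •
          (lp.single 2 (QuotientGroup.mk x : G ⧸ H) (1 : ℂ) :
            lp (fun _ : G ⧸ H => ℂ) 2)) :=
      hasSum_ite_eq _ _
    have := hsum2.unique hsum3
    rw [hT] at this
    rw [this, lp.inner_single_left]
    norm_num
  refine ⟨key, ?_, ?_⟩
  · -- star
    intro x y
    rw [ContinuousLinearMap.star_eq_adjoint]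
    symm
    rw [ContinuousLinearMap.eq_adjoint_iff]
    intro ζ η
    rw [key y x ζ, key x y η, inner_smul_left, inner_smul_right,
      lp.inner_single_left, lp.inner_single_left, lp.inner_single_right]
    simp only [RCLike.inner_apply, map_one, one_mul, mul_one]
    ring
  · -- products
    intro x y w z
    have hinner : (inner ℂ (lp.single 2 (QuotientGroup.mk y : G ⧸ H) (1 : ℂ))
        (lp.single 2 (QuotientGroup.mk w : G ⧸ H) (1 : ℂ) :
          lp (fun _ : G ⧸ H => ℂ) 2) : ℂ) =
        if (QuotientGroup.mk w : G ⧸ H) = QuotientGroup.mk y then 1 else 0 := by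
      rw [lp.inner_single_left]
      by_cases h : (QuotientGroup.mk w : G ⧸ H) = QuotientGroup.mk y
      · rw [if_pos h, h, lp.single_apply_self]
        simp
      · rw [if_neg h, lp.single_apply_ne _ _ _ (fun hc => h hc.symm)]
        simp
    by_cases hwy : (QuotientGroup.mk w : G ⧸ H) = QuotientGroup.mk y
    · rw [if_pos hwy]
      ext ζ
      rw [ContinuousLinearMap.mul_apply, key w z ζ, map_smul, key x y, hinner,
        if_pos hwy, one_smul, key x z ζ]
    · rw [if_neg hwy]
      ext ζ
      rw [ContinuousLinearMap.mul_apply, key w z ζ, map_smul, key x y, hinner,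
        if_neg hwy, zero_smul, smul_zero, ContinuousLinearMap.zero_apply]
end

section
/- Let $(G,H)$ be a discrete Hecke pair, $\nu$ a nondegenerate $*$-representation of $c_0(G/H)$, and $V$ a unital $*$-representation of $\mathcal{H}(G,H)$ on a Hilbert space $\mathcal{H}$. Then $(\nu,V)$ is a covariant pair if and only if there exists a Hilbert space $\mathcal{H}_0$ and a unitary $\Psi: \mathcal{H} \to \mathcal{H}_0 \otimes \ell^2(G/H)$ with $\Psi\nu(f)\Psi^* = 1 \otimes M(f)$ for all $f \in c_0(G/H)$ and $\Psi V(g) \Psi^* = 1 \otimes \rho(g)$ for all $g \in \mathcal{H}(G,H)$. -/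
open scoped Classical Pointwise

variable {G : Type*} [Group G]

universe u

section Slice
variable {M α β : Type*} [AddCommMonoid M]

theorem finsum_prod_slice (F : α × β → M) (a0 : α)
    (hF : ∀ p : α × β, F p ≠ 0 → p.1 = a0) :
    ∑ᶠ p : α × β, F p = ∑ᶠ u : β, F (a0, u) := by
  have hinj : Function.Injective (fun u : β => (a0, u)) := fun u v h => congrArg Prod.snd h
  have hsub : Function.support F ⊆ Set.range (fun u : β => (a0, u)) := by
    intro p hp
    exact ⟨p.2, Prod.ext (hF p hp).symm rfl⟩
  rw [← finsum_mem_range hinj, finsum_mem_def, Set.indicator_eq_self.2 hsub]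

end Slice

namespace HeckeAux
variable {H : Subgroup G}

theorem mem_dcos {a b : G} : b ∈ dcos H a ↔ ∃ x ∈ H, ∃ y ∈ H, b = x * a * y := DoubleCoset.mem_doubleCoset
theorem mem_dcos_self (a : G) : a ∈ dcos H a := DoubleCoset.mem_doubleCoset_self H H a
theorem dcos_eq_of_mem {a b : G} (h : b ∈ dcos H a) : dcos H b = dcos H a := DoubleCoset.doubleCoset_eq_of_mem h
theorem mem_dcos_of_mem {a b : G} (h : b ∈ dcos H a) {c : G} (hc : c ∈ dcos H b) : c ∈ dcos H a := by
  rw [← dcos_eq_of_mem h]; exact hc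
theorem mem_dcos_symm {a b : G} (h : b ∈ dcos H a) : a ∈ dcos H b := by
  rw [dcos_eq_of_mem h]; exact mem_dcos_self a
theorem mem_dcos_iff_of_mem {a b b' : G} (h : b' ∈ dcos H b) : b' ∈ dcos H a ↔ b ∈ dcos H a :=
  ⟨fun h' => mem_dcos_of_mem h' (mem_dcos_symm h), fun h' => mem_dcos_of_mem h' h⟩
theorem mem_dcos_of_mk_eq {a b : G} (h : (a : G ⧸ H) = (b : G ⧸ H)) : b ∈ dcos H a := by
  rw [QuotientGroup.eq] at h
  have : b = 1 * a * (a⁻¹ * b) := by group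
  exact this ▸ mem_dcos.2 ⟨1, one_mem _, a⁻¹ * b, h, rfl⟩
theorem out_mk_mem_dcos (g : G) : Quotient.out (QuotientGroup.mk g : G ⧸ H) ∈ dcos H g :=
  mem_dcos_of_mk_eq (QuotientGroup.out_eq' _).symm
theorem out_mk_mem_dcos_iff {g a : G} :
    Quotient.out (QuotientGroup.mk g : G ⧸ H) ∈ dcos H a ↔ g ∈ dcos H a :=
  mem_dcos_iff_of_mem (out_mk_mem_dcos g)
theorem setFinite (hHecke : IsHeckePair H) (a : G) :
    {u : G ⧸ H | Quotient.out u ∈ dcos H a}.Finite := by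
  refine (hHecke a).subset ?_
  intro u hu
  exact ⟨Quotient.out u, hu, QuotientGroup.out_eq' u⟩
theorem mk_mul_out_eq_iff (y z : G) (u : G ⧸ H) :
    (QuotientGroup.mk (y * Quotient.out u) : G ⧸ H) = QuotientGroup.mk z ↔
      u = QuotientGroup.mk (y⁻¹ * z) := by
  have h1 : (y * Quotient.out u)⁻¹ * z = (Quotient.out u)⁻¹ * (y⁻¹ * z) := by group
  rw [QuotientGroup.eq, h1, ← QuotientGroup.eq, QuotientGroup.out_eq']

section Ops
variable {E : Type u} [NormedAddCommGroup E] [InnerProductSpace ℂ E] [CompleteSpace E]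
variable (ν : G ⧸ H → E →L[ℂ] E) (V : G → E →L[ℂ] E)

/-- One-sided reduction of the covariance identity. -/
theorem redL (hHecke : IsHeckePair H)
    (hν_idem : ∀ c, ν c * ν c = ν c)
    (hν_orth : ∀ c d, c ≠ d → ν c * ν d = 0)
    (hcov : ∀ a x b : G,
      V a * ν (QuotientGroup.mk x) * V b =
        ∑ᶠ p : (G ⧸ H) × (G ⧸ H),
          if Quotient.out p.1 ∈ dcos H a⁻¹ ∧ Quotient.out p.2 ∈ dcos H b then
            ν (QuotientGroup.mk (x * Quotient.out p.1)) *
              V ((Quotient.out p.1)⁻¹ * Quotient.out p.2) *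
              ν (QuotientGroup.mk (x * Quotient.out p.2))
          else 0)
    (a x b : G) (c : G ⧸ H) :
    ν c * (V a * ν (QuotientGroup.mk x) * V b) =
      ∑ᶠ u : G ⧸ H,
        if Quotient.out (QuotientGroup.mk (x⁻¹ * Quotient.out c) : G ⧸ H) ∈ dcos H a⁻¹ ∧
            Quotient.out u ∈ dcos H b then
          ν c * V ((Quotient.out (QuotientGroup.mk (x⁻¹ * Quotient.out c) : G ⧸ H))⁻¹ *
              Quotient.out u) * ν (QuotientGroup.mk (x * Quotient.out u))
        else 0 := by
  classical
  set p1s : G ⧸ H := QuotientGroup.mk (x⁻¹ * Quotient.out c) with hp1s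
  -- the summand of the covariance identity
  set T : (G ⧸ H) × (G ⧸ H) → E →L[ℂ] E := fun p =>
    if Quotient.out p.1 ∈ dcos H a⁻¹ ∧ Quotient.out p.2 ∈ dcos H b then
      ν (QuotientGroup.mk (x * Quotient.out p.1)) *
        V ((Quotient.out p.1)⁻¹ * Quotient.out p.2) *
        ν (QuotientGroup.mk (x * Quotient.out p.2))
    else 0 with hT
  have hfinT : (Function.support T).Finite := by
    refine (((setFinite hHecke a⁻¹).prod (setFinite hHecke b)).subset ?_)
    intro p hp
    rw [Function.mem_support, hT] at hp
    by_cases hC : Quotient.out p.1 ∈ dcos H a⁻¹ ∧ Quotient.out p.2 ∈ dcos H b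
    · exact ⟨hC.1, hC.2⟩
    · simp [hC] at hp
  have hmain : ν c * (V a * ν (QuotientGroup.mk x) * V b) = ∑ᶠ p, ν c * T p := by
    rw [hcov a x b]
    exact AddMonoidHom.map_finsum (AddMonoidHom.mulLeft (ν c)) hfinT
  rw [hmain]
  have hiff : ∀ p1 : G ⧸ H,
      (QuotientGroup.mk (x * Quotient.out p1) : G ⧸ H) = c ↔ p1 = p1s := by
    intro p1
    conv_lhs => rw [← QuotientGroup.out_eq' c]
    rw [mk_mul_out_eq_iff x (Quotient.out c) p1, ← hp1s]
  -- termwise rewriting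
  have hterm : ∀ p : (G ⧸ H) × (G ⧸ H), ν c * T p =
      (fun p : (G ⧸ H) × (G ⧸ H) =>
        if (Quotient.out p.1 ∈ dcos H a⁻¹ ∧ Quotient.out p.2 ∈ dcos H b) ∧ p.1 = p1s then
          ν c * V ((Quotient.out p1s)⁻¹ * Quotient.out p.2) *
            ν (QuotientGroup.mk (x * Quotient.out p.2))
        else 0) p := by
    intro p
    rw [hT]
    by_cases hC : Quotient.out p.1 ∈ dcos H a⁻¹ ∧ Quotient.out p.2 ∈ dcos H b
    · simp only [hC, if_true, true_and]
      by_cases hp1 : p.1 = p1s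
      · rw [if_pos hp1, ← hp1, ← mul_assoc, ← mul_assoc, (hiff p.1).2 hp1, hν_idem c]
      · rw [if_neg hp1, ← mul_assoc, ← mul_assoc,
          hν_orth c _ (fun hh => hp1 ((hiff p.1).1 hh.symm)), zero_mul, zero_mul]
    · simp [hC]
  rw [finsum_congr hterm]
  rw [finsum_prod_slice _ p1s (by
    intro p hp
    by_contra hne
    simp only [hne, and_false, if_false] at hp
    exact hp rfl)]
  refine finsum_congr fun u => ?_
  simp only [and_assoc]
  by_cases h1 : Quotient.out p1s ∈ dcos H a⁻¹ <;>
    by_cases h2 : Quotient.out u ∈ dcos H b <;> simp [h1, h2]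


theorem eq_mk_one_iff {u : G ⧸ H} : u = QuotientGroup.mk (1 : G) ↔ Quotient.out u ∈ H := by
  rw [← QuotientGroup.out_eq' u, QuotientGroup.eq]
  simp

theorem out_one_mem (H : Subgroup G) :
    Quotient.out (QuotientGroup.mk (1 : G) : G ⧸ H) ∈ H :=
  eq_mk_one_iff.1 rfl

theorem mem_dcos_one_iff {g : G} : g ∈ dcos H 1 ↔ g ∈ H := by
  constructor
  · rintro h
    obtain ⟨h1, hh1, h2, hh2, rfl⟩ := mem_dcos.1 h
    simpa using mul_mem hh1 hh2
  · intro hg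
    have : g = g * 1 * 1 := by group
    exact this ▸ mem_dcos.2 ⟨g, hg, 1, one_mem _, rfl⟩

theorem eq_mk_iff_out_mem {u : G ⧸ H} {g : G} :
    u = QuotientGroup.mk g ↔ ∃ h ∈ H, Quotient.out u = g * h := by
  constructor
  · intro h
    have := QuotientGroup.eq.1 ((QuotientGroup.out_eq' u).trans h).symm
    exact ⟨g⁻¹ * Quotient.out u, this, by group⟩
  · rintro ⟨h, hh, hout⟩
    rw [← QuotientGroup.out_eq' u, hout]
    exact (QuotientGroup.eq.2 (by simpa using inv_mem hh)).symm

theorem mem_dcos_inv_iff {a b : G} : b⁻¹ ∈ dcos H a⁻¹ ↔ b ∈ dcos H a := by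
  constructor
  · intro h
    obtain ⟨h1, hh1, h2, hh2, he⟩ := mem_dcos.1 h
    refine mem_dcos.2 ⟨h2⁻¹, inv_mem hh2, h1⁻¹, inv_mem hh1, ?_⟩
    have := congrArg (·⁻¹) he
    simp only [inv_inv] at this
    rw [this]; group
  · intro h
    obtain ⟨h1, hh1, h2, hh2, rfl⟩ := mem_dcos.1 h
    exact mem_dcos.2 ⟨h2⁻¹, inv_mem hh2, h1⁻¹, inv_mem hh1, by group⟩

variable (hHecke : IsHeckePair H)
    (hν_idem : ∀ c, ν c * ν c = ν c)
    (hν_orth : ∀ c d, c ≠ d → ν c * ν d = 0)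
    (hV_class : ∀ a b : G, b ∈ dcos H a → V b = V a)
    (hV_one : V 1 = 1)
    (hcov : ∀ a x b : G,
      V a * ν (QuotientGroup.mk x) * V b =
        ∑ᶠ p : (G ⧸ H) × (G ⧸ H),
          if Quotient.out p.1 ∈ dcos H a⁻¹ ∧ Quotient.out p.2 ∈ dcos H b then
            ν (QuotientGroup.mk (x * Quotient.out p.1)) *
              V ((Quotient.out p.1)⁻¹ * Quotient.out p.2) *
              ν (QuotientGroup.mk (x * Quotient.out p.2))
          else 0)
include hHecke hν_idem hν_orth hV_class hV_one hcov in
/-- The key identity: `A d ∘ V a = ∑ᶠ u ⊆ HaH, A (d·u)` where `A c = ν₁ V(out c) ν c`. -/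
theorem keyA (d : G ⧸ H) (α : G) :
    ν (QuotientGroup.mk 1) * V (Quotient.out d) * ν d * V α =
      ∑ᶠ u : G ⧸ H,
        if Quotient.out u ∈ dcos H α then
          ν (QuotientGroup.mk 1) *
            V (Quotient.out (QuotientGroup.mk (Quotient.out d * Quotient.out u) : G ⧸ H)) *
            ν (QuotientGroup.mk (Quotient.out d * Quotient.out u))
        else 0 := by
  classical
  have h0 := redL ν V hHecke hν_idem hν_orth hcov (Quotient.out d) (Quotient.out d) α
    (QuotientGroup.mk 1)
  rw [QuotientGroup.out_eq' d] at h0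
  have hL : ν (QuotientGroup.mk 1) * V (Quotient.out d) * ν d * V α =
      ν (QuotientGroup.mk (1:G)) * (V (Quotient.out d) * ν d * V α) := by
    rw [← mul_assoc, ← mul_assoc]
  rw [hL, h0]
  -- now rewrite termwise
  set q : G ⧸ H := QuotientGroup.mk ((Quotient.out d)⁻¹ *
    Quotient.out (QuotientGroup.mk (1:G) : G ⧸ H)) with hq
  obtain ⟨m, hm, hqout⟩ := (eq_mk_iff_out_mem (u := q)).1 hq
  have h₀mem : Quotient.out (QuotientGroup.mk (1:G) : G ⧸ H) ∈ H := out_one_mem H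
  refine finsum_congr fun u => ?_
  have hc1 : Quotient.out q ∈ dcos H (Quotient.out d)⁻¹ :=
    mem_dcos.2 ⟨1, one_mem _, Quotient.out (QuotientGroup.mk (1:G) : G ⧸ H) * m,
      mul_mem h₀mem hm, by rw [hqout]; group⟩
  by_cases hu : Quotient.out u ∈ dcos H α
  · have e1 : V ((Quotient.out q)⁻¹ * Quotient.out u) =
        V (Quotient.out d * Quotient.out u) := by
      apply hV_class
      refine mem_dcos.2 ⟨m⁻¹ * (Quotient.out (QuotientGroup.mk (1:G) : G ⧸ H))⁻¹,
        mul_mem (inv_mem hm) (inv_mem h₀mem), 1, one_mem _, ?_⟩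
      rw [hqout]; group
    have e2 : V (Quotient.out (QuotientGroup.mk
          (Quotient.out d * Quotient.out u) : G ⧸ H)) =
        V (Quotient.out d * Quotient.out u) := by
      apply hV_class
      exact out_mk_mem_dcos _
    rw [if_pos ⟨hc1, hu⟩, if_pos hu, e1, e2]
  · rw [if_neg ?_, if_neg hu]
    exact fun h => hu h.2

include hHecke hν_idem hν_orth hV_class hV_one hcov in
/-- `A d * B d = ν₁` -/
theorem idI (d : G ⧸ H) :
    ν (QuotientGroup.mk 1) * V (Quotient.out d) * ν d * V (Quotient.out d)⁻¹ *
      ν (QuotientGroup.mk 1) = ν (QuotientGroup.mk 1) := by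
  classical
  have h0 := keyA ν V hHecke hν_idem hν_orth hV_class hV_one hcov d (Quotient.out d)⁻¹
  have hfin : (Function.support fun u : G ⧸ H =>
      (if Quotient.out u ∈ dcos H (Quotient.out d)⁻¹ then
        ν (QuotientGroup.mk 1) *
          V (Quotient.out (QuotientGroup.mk (Quotient.out d * Quotient.out u) : G ⧸ H)) *
          ν (QuotientGroup.mk (Quotient.out d * Quotient.out u))
      else 0)).Finite := by
    refine (setFinite hHecke (Quotient.out d)⁻¹).subset fun u hu => ?_
    rw [Function.mem_support] at hu
    by_contra hnot
    exact hu (if_neg hnot)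
  have h1 : ν (QuotientGroup.mk 1) * V (Quotient.out d) * ν d * V (Quotient.out d)⁻¹ *
      ν (QuotientGroup.mk 1) =
      ∑ᶠ u : G ⧸ H,
        (if Quotient.out u ∈ dcos H (Quotient.out d)⁻¹ then
          ν (QuotientGroup.mk 1) *
            V (Quotient.out (QuotientGroup.mk (Quotient.out d * Quotient.out u) : G ⧸ H)) *
            ν (QuotientGroup.mk (Quotient.out d * Quotient.out u))
        else 0) * ν (QuotientGroup.mk 1) := by
    rw [h0]
    exact AddMonoidHom.map_finsum (AddMonoidHom.mulRight (ν (QuotientGroup.mk 1))) hfin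
  rw [h1]
  set u0 : G ⧸ H := QuotientGroup.mk (Quotient.out d)⁻¹ with hu0
  have hkey : ∀ u : G ⧸ H,
      ((QuotientGroup.mk (Quotient.out d * Quotient.out u) : G ⧸ H) =
        QuotientGroup.mk 1) ↔ u = u0 := by
    intro u
    rw [mk_mul_out_eq_iff (Quotient.out d) 1 u, hu0, mul_one]
  rw [finsum_eq_single _ u0 ?side]
  case side =>
    intro u hu
    by_cases h : Quotient.out u ∈ dcos H (Quotient.out d)⁻¹
    · rw [if_pos h]
      simp only [mul_assoc]
      rw [hν_orth _ _ (fun hh => hu ((hkey u).1 hh)), mul_zero, mul_zero]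
    · rw [if_neg h, zero_mul]
  · -- value at u0
    have hmem : Quotient.out u0 ∈ dcos H (Quotient.out d)⁻¹ := by
      rw [hu0]; exact out_mk_mem_dcos_iff.2 (mem_dcos_self _)
    rw [if_pos hmem]
    have hmk : (QuotientGroup.mk (Quotient.out d * Quotient.out u0) : G ⧸ H) =
        QuotientGroup.mk 1 := (hkey u0).2 rfl
    have hVone : V (Quotient.out (QuotientGroup.mk
        (Quotient.out d * Quotient.out u0) : G ⧸ H)) = 1 := by
      rw [hmk]
      rw [hV_class 1 _ (mem_dcos_one_iff.2 (out_one_mem H)), hV_one]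
    rw [hVone, hmk, mul_one, hν_idem, hν_idem]

include hHecke hν_idem hν_orth hV_class hV_one hcov in
/-- `B d * A d = ν d` -/
theorem idII (d : G ⧸ H) :
    ν d * V (Quotient.out d)⁻¹ * ν (QuotientGroup.mk 1) * V (Quotient.out d) * ν d =
      ν d := by
  classical
  have h0 := redL ν V hHecke hν_idem hν_orth hcov (Quotient.out d)⁻¹ 1 (Quotient.out d) d
  have hsimp : (QuotientGroup.mk ((1:G)⁻¹ * Quotient.out d) : G ⧸ H) = d := by
    rw [inv_one, one_mul, QuotientGroup.out_eq']
  rw [hsimp] at h0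
  have hfin : (Function.support fun u : G ⧸ H =>
      (if Quotient.out d ∈ dcos H ((Quotient.out d)⁻¹)⁻¹ ∧
          Quotient.out u ∈ dcos H (Quotient.out d) then
        ν d * V ((Quotient.out d)⁻¹ * Quotient.out u) *
          ν (QuotientGroup.mk (1 * Quotient.out u))
      else 0)).Finite := by
    refine (setFinite hHecke (Quotient.out d)).subset fun u hu => ?_
    rw [Function.mem_support] at hu
    by_contra hnot
    exact hu (if_neg fun hc => hnot hc.2)
  have h1 : ν d * V (Quotient.out d)⁻¹ * ν (QuotientGroup.mk 1) * V (Quotient.out d) * ν d =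
      ∑ᶠ u : G ⧸ H,
        (if Quotient.out d ∈ dcos H ((Quotient.out d)⁻¹)⁻¹ ∧
            Quotient.out u ∈ dcos H (Quotient.out d) then
          ν d * V ((Quotient.out d)⁻¹ * Quotient.out u) *
            ν (QuotientGroup.mk (1 * Quotient.out u))
        else 0) * ν d := by
    have hL : ν d * V (Quotient.out d)⁻¹ * ν (QuotientGroup.mk 1) * V (Quotient.out d) * ν d =
        (ν d * (V (Quotient.out d)⁻¹ * ν (QuotientGroup.mk 1) * V (Quotient.out d))) * ν d := by
      simp only [mul_assoc]
    rw [hL, h0]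
    exact AddMonoidHom.map_finsum (AddMonoidHom.mulRight (ν d)) hfin
  rw [h1]
  have hkey : ∀ u : G ⧸ H,
      ((QuotientGroup.mk (1 * Quotient.out u) : G ⧸ H) = d) ↔ u = d := by
    intro u
    conv_lhs => rw [← QuotientGroup.out_eq' d]
    rw [mk_mul_out_eq_iff 1 (Quotient.out d) u, inv_one, one_mul, QuotientGroup.out_eq']
  rw [finsum_eq_single _ d ?side]
  case side =>
    intro u hu
    by_cases h : Quotient.out d ∈ dcos H ((Quotient.out d)⁻¹)⁻¹ ∧
        Quotient.out u ∈ dcos H (Quotient.out d)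
    · rw [if_pos h]
      simp only [mul_assoc]
      rw [hν_orth _ _ (fun hh => hu ((hkey u).1 hh)), mul_zero, mul_zero]
    · rw [if_neg h, zero_mul]
  · have hmem : Quotient.out d ∈ dcos H ((Quotient.out d)⁻¹)⁻¹ ∧
        Quotient.out d ∈ dcos H (Quotient.out d) := by
      constructor
      · rw [inv_inv]; exact mem_dcos_self _
      · exact mem_dcos_self _
    rw [if_pos hmem]
    have hVone : V ((Quotient.out d)⁻¹ * Quotient.out d) = 1 := by
      rw [inv_mul_cancel, hV_one]
    have hmk : (QuotientGroup.mk (1 * Quotient.out d) : G ⧸ H) = d := (hkey d).2 rfl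
    rw [hVone, hmk, mul_one, hν_idem, hν_idem]



open scoped ComplexInnerProductSpace

section Fwd
variable (hν_sa : ∀ c, IsSelfAdjoint (ν c))
variable (hV_star : ∀ a : G, star (V a) = V a⁻¹)

set_option linter.unusedSectionVars false

/-- `A` operator: `A c = ν₁ V(out c) ν c`. -/
noncomputable abbrev Aop (c : G ⧸ H) : E →L[ℂ] E :=
  ν (QuotientGroup.mk 1) * V (Quotient.out c) * ν c

/-- `B` operator: `B c = ν c V((out c)⁻¹) ν₁`. -/
noncomputable abbrev Bop (c : G ⧸ H) : E →L[ℂ] E :=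
  ν c * V (Quotient.out c)⁻¹ * ν (QuotientGroup.mk 1)

include hHecke hν_idem hν_orth hV_class hV_one hcov hν_sa hV_star in
theorem mem_range_iff_fix (c : G ⧸ H) (x : E) :
    x ∈ LinearMap.range (ν c : E →ₗ[ℂ] E) ↔ ν c x = x := by
  constructor
  · rintro ⟨y, rfl⟩
    exact DFunLike.congr_fun (hν_idem c) y
  · intro h
    exact ⟨x, h⟩

include hHecke hν_idem hν_orth hV_class hV_one hcov hν_sa hV_star in
theorem range_isClosed (c : G ⧸ H) :
    IsClosed ((LinearMap.range (ν c : E →ₗ[ℂ] E) : Submodule ℂ E) : Set E) := by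
  have h : ((LinearMap.range (ν c : E →ₗ[ℂ] E) : Submodule ℂ E) : Set E) = {x | ν c x = x} := by
    ext x
    exact mem_range_iff_fix ν V hHecke hν_idem hν_orth hV_class hV_one hcov hν_sa hV_star c x
  rw [h]
  exact isClosed_eq (ν c).continuous continuous_id

include hHecke hν_idem hν_orth hV_class hV_one hcov hν_sa hV_star in
theorem nu_adj (c : G ⧸ H) (x y : E) : ⟪ν c x, y⟫ = ⟪x, ν c y⟫ := by
  have h := (hν_sa c).star_eq
  rw [ContinuousLinearMap.star_eq_adjoint] at h
  calc ⟪ν c x, y⟫ = ⟪(ContinuousLinearMap.adjoint (ν c)) x, y⟫ := by rw [h]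
    _ = ⟪x, ν c y⟫ := ContinuousLinearMap.adjoint_inner_left (ν c) y x

include hHecke hν_idem hν_orth hV_class hV_one hcov hν_sa hV_star in
theorem star_Bop (d : G ⧸ H) : star (Bop ν V d) = Aop ν V d := by
  rw [show Bop ν V d = ν d * V (Quotient.out d)⁻¹ * ν (QuotientGroup.mk 1) from rfl,
    star_mul, star_mul, (hν_sa _).star_eq, (hν_sa _).star_eq, hV_star, inv_inv, ← mul_assoc]

include hHecke hν_idem hν_orth hV_class hV_one hcov hν_sa hV_star in
theorem hAB (d : G ⧸ H) : Aop ν V d * Bop ν V d = ν (QuotientGroup.mk 1) := by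
  have hcol : ∀ (X : E →L[ℂ] E) (c : G ⧸ H), ν c * (ν c * X) = ν c * X := fun X c => by
    rw [← mul_assoc, hν_idem]
  have h := idI ν V hHecke hν_idem hν_orth hV_class hV_one hcov d
  simp only [mul_assoc] at h ⊢
  rw [hcol]
  exact h

include hHecke hν_idem hν_orth hV_class hV_one hcov hν_sa hV_star in
theorem hBA (d : G ⧸ H) : Bop ν V d * Aop ν V d = ν d := by
  have hcol : ∀ (X : E →L[ℂ] E) (c : G ⧸ H), ν c * (ν c * X) = ν c * X := fun X c => by
    rw [← mul_assoc, hν_idem]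
  have h := idII ν V hHecke hν_idem hν_orth hV_class hV_one hcov d
  simp only [mul_assoc] at h ⊢
  rw [hcol]
  exact h

include hHecke hν_idem hν_orth hV_class hV_one hcov hν_sa hV_star in
theorem hABz {c d : G ⧸ H} (hcd : c ≠ d) : Aop ν V c * Bop ν V d = 0 := by
  show ν (QuotientGroup.mk 1) * V (Quotient.out c) * ν c *
    (ν d * V (Quotient.out d)⁻¹ * ν (QuotientGroup.mk 1)) = 0
  simp only [mul_assoc]
  rw [← mul_assoc (ν c) (ν d), hν_orth c d hcd, zero_mul, mul_zero, mul_zero]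

include hHecke hν_idem hν_orth hV_class hV_one hcov hν_sa hV_star in
theorem hAnu (c : G ⧸ H) : Aop ν V c * ν c = Aop ν V c := by
  show ν (QuotientGroup.mk 1) * V (Quotient.out c) * ν c * ν c = _
  rw [mul_assoc, hν_idem]

include hHecke hν_idem hν_orth hV_class hV_one hcov hν_sa hV_star in
theorem hAnuz {c e : G ⧸ H} (hce : c ≠ e) : Aop ν V c * ν e = 0 := by
  show ν (QuotientGroup.mk 1) * V (Quotient.out c) * ν c * ν e = 0
  rw [mul_assoc, hν_orth c e hce, mul_zero]

theorem hAmem (c : G ⧸ H) (x : E) :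
    Aop ν V c x ∈ LinearMap.range (ν (QuotientGroup.mk (1:G) : G ⧸ H) : E →ₗ[ℂ] E) :=
  ⟨V (Quotient.out c) (ν c x), rfl⟩

include hHecke hν_idem hν_orth hV_class hV_one hcov hν_sa hV_star in
theorem forward
    (hν_nd : (⨆ c : G ⧸ H, LinearMap.range (ν c : E →ₗ[ℂ] E)).topologicalClosure = ⊤) :
    ∃ (H₀ : Type u) (_ : NormedAddCommGroup H₀) (_ : InnerProductSpace ℂ H₀)
        (_ : CompleteSpace H₀) (Ψ : E ≃ₗᵢ[ℂ] lp (fun _ : G ⧸ H => H₀) 2),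
      (∀ (c : G ⧸ H) (ξ : E) (d : G ⧸ H),
        (Ψ (ν c ξ) : ∀ _ : G ⧸ H, H₀) d =
          if d = c then (Ψ ξ : ∀ _ : G ⧸ H, H₀) d else 0) ∧
      (∀ (a : G) (ξ : E) (d : G ⧸ H),
        (Ψ (V a ξ) : ∀ _ : G ⧸ H, H₀) d =
          ∑ᶠ u : G ⧸ H,
            if Quotient.out u ∈ dcos H a then
              (Ψ ξ : ∀ _ : G ⧸ H, H₀)
                (QuotientGroup.mk (Quotient.out d * Quotient.out u))
            else 0) := by
  classical
  set K : Submodule ℂ E := LinearMap.range (ν (QuotientGroup.mk (1:G) : G ⧸ H) : E →ₗ[ℂ] E) with hK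
  haveI hKc : CompleteSpace ↥K :=
    (range_isClosed ν V hHecke hν_idem hν_orth hV_class hV_one hcov hν_sa hV_star
      (QuotientGroup.mk 1)).completeSpace_coe
  have hfix : ∀ (c : G ⧸ H) (x : E), x ∈ LinearMap.range (ν c : E →ₗ[ℂ] E) ↔ ν c x = x :=
    mem_range_iff_fix ν V hHecke hν_idem hν_orth hV_class hV_one hcov hν_sa hV_star
  -- norm preservation of B d on K
  have hnorm : ∀ (d : G ⧸ H) (y : ↥K), ‖Bop ν V d (y : E)‖ = ‖(y : E)‖ := by
    intro d y
    have hy : ν (QuotientGroup.mk 1) (y : E) = (y : E) := (hfix _ _).1 y.2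
    have hinner : ⟪Bop ν V d (y : E), Bop ν V d (y : E)⟫ = ⟪(y : E), (y : E)⟫ := by
      calc ⟪Bop ν V d (y : E), Bop ν V d (y : E)⟫
          = ⟪(y : E), (ContinuousLinearMap.adjoint (Bop ν V d)) (Bop ν V d (y : E))⟫ :=
            (ContinuousLinearMap.adjoint_inner_right _ _ _).symm
        _ = ⟪(y : E), (Aop ν V d) (Bop ν V d (y : E))⟫ := by
            rw [← ContinuousLinearMap.star_eq_adjoint,
              star_Bop ν V hHecke hν_idem hν_orth hV_class hV_one hcov hν_sa hV_star d]
        _ = ⟪(y : E), ν (QuotientGroup.mk 1) (y : E)⟫ := by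
            rw [show (Aop ν V d) (Bop ν V d (y : E)) =
              (Aop ν V d * Bop ν V d) (y : E) from rfl,
              hAB ν V hHecke hν_idem hν_orth hV_class hV_one hcov hν_sa hV_star d]
        _ = ⟪(y : E), (y : E)⟫ := by rw [hy]
    rw [norm_eq_sqrt_re_inner (𝕜 := ℂ), norm_eq_sqrt_re_inner (𝕜 := ℂ) (y : E), hinner]
  let V' : ∀ _ : G ⧸ H, ↥K →ₗᵢ[ℂ] E := fun d =>
    { toLinearMap := ((Bop ν V d : E →L[ℂ] E) : E →ₗ[ℂ] E).comp K.subtype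
      norm_map' := fun y => hnorm d y }
  have hV'app : ∀ (d : G ⧸ H) (y : ↥K), V' d y = Bop ν V d (y : E) := fun d y => rfl
  have hOrth : OrthogonalFamily ℂ (fun _ : G ⧸ H => ↥K) V' := by
    intro c d hcd y z
    have h1 : V' c y =
        ν c (V (Quotient.out c)⁻¹ (ν (QuotientGroup.mk 1) (y : E))) := rfl
    have h2 : V' d z =
        ν d (V (Quotient.out d)⁻¹ (ν (QuotientGroup.mk 1) (z : E))) := rfl
    rw [h1, h2, nu_adj ν V hHecke hν_idem hν_orth hV_class hV_one hcov hν_sa hV_star c]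
    have h3 : ν c (ν d (V (Quotient.out d)⁻¹ (ν (QuotientGroup.mk 1) (z : E)))) = 0 := by
      have h4 := DFunLike.congr_fun (hν_orth c d hcd)
        (V (Quotient.out d)⁻¹ (ν (QuotientGroup.mk 1) (z : E)))
      simpa using h4
    rw [h3, inner_zero_right]
  have hrange : ∀ d : G ⧸ H,
      LinearMap.range (V' d).toLinearMap = LinearMap.range (ν d : E →ₗ[ℂ] E) := by
    intro d
    ext x
    constructor
    · rintro ⟨y, rfl⟩
      exact ⟨V (Quotient.out d)⁻¹ (ν (QuotientGroup.mk 1) (y : E)), rfl⟩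
    · rintro ⟨z, rfl⟩
      refine ⟨⟨Aop ν V d (ν d z), hAmem ν V d (ν d z)⟩, ?_⟩
      show Bop ν V d (Aop ν V d (ν d z)) = ν d z
      rw [show Bop ν V d (Aop ν V d (ν d z)) =
          (Bop ν V d * Aop ν V d) (ν d z) from rfl,
        hBA ν V hHecke hν_idem hν_orth hV_class hV_one hcov hν_sa hV_star d]
      exact DFunLike.congr_fun (hν_idem d) z
  have htotal : ⊤ ≤ (⨆ d : G ⧸ H, LinearMap.range (V' d).toLinearMap).topologicalClosure := by
    rw [iSup_congr hrange, hν_nd]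
  have hsum : IsHilbertSum ℂ (fun _ : G ⧸ H => ↥K) V' := IsHilbertSum.mk hOrth htotal
  set Ψ := hsum.linearIsometryEquiv with hΨdef
  have hcomp : ∀ (ξ : E) (c : G ⧸ H), ((Ψ ξ : ∀ _ : G ⧸ H, ↥K) c : E) = Aop ν V c ξ := by
    intro ξ c
    have h1 : HasSum (fun d => V' d ((Ψ ξ : ∀ _ : G ⧸ H, ↥K) d)) ξ := by
      have h0 := hsum.hasSum_linearIsometryEquiv_symm (Ψ ξ)
      rwa [hΨdef, LinearIsometryEquiv.symm_apply_apply] at h0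
    have h2 : HasSum (fun d => Aop ν V c (V' d ((Ψ ξ : ∀ _ : G ⧸ H, ↥K) d)))
        (Aop ν V c ξ) := (Aop ν V c).hasSum h1
    have hval : Aop ν V c (V' c ((Ψ ξ : ∀ _ : G ⧸ H, ↥K) c)) =
        (((Ψ ξ : ∀ _ : G ⧸ H, ↥K) c : E)) := by
      rw [hV'app, show Aop ν V c (Bop ν V c (((Ψ ξ : ∀ _ : G ⧸ H, ↥K) c : E))) =
        (Aop ν V c * Bop ν V c) (((Ψ ξ : ∀ _ : G ⧸ H, ↥K) c : E)) from rfl,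
        hAB ν V hHecke hν_idem hν_orth hV_class hV_one hcov hν_sa hV_star c]
      exact (hfix _ _).1 ((Ψ ξ : ∀ _ : G ⧸ H, ↥K) c).2
    have h3 : HasSum (fun d => Aop ν V c (V' d ((Ψ ξ : ∀ _ : G ⧸ H, ↥K) d)))
        (((Ψ ξ : ∀ _ : G ⧸ H, ↥K) c : E)) := by
      have h4 := hasSum_single (f := fun d => Aop ν V c (V' d ((Ψ ξ : ∀ _ : G ⧸ H, ↥K) d))) c ?_
      · rwa [hval] at h4
      · intro d hdc
        show Aop ν V c (V' d ((Ψ ξ : ∀ _ : G ⧸ H, ↥K) d)) = 0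
        rw [hV'app, show Aop ν V c (Bop ν V d (((Ψ ξ : ∀ _ : G ⧸ H, ↥K) d : E))) =
          (Aop ν V c * Bop ν V d) (((Ψ ξ : ∀ _ : G ⧸ H, ↥K) d : E)) from rfl,
          hABz ν V hHecke hν_idem hν_orth hV_class hV_one hcov hν_sa hV_star
            (fun h => hdc h.symm), ContinuousLinearMap.zero_apply]
    exact (h2.unique h3).symm
  refine ⟨↥K, inferInstance, inferInstance, hKc, Ψ, ?_, ?_⟩
  · intro c ξ d
    by_cases hdc : d = c
    · subst hdc
      apply Subtype.ext
      rw [hcomp (ν d ξ) d, if_pos rfl, hcomp ξ d]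
      show (Aop ν V d * ν d) ξ = Aop ν V d ξ
      rw [hAnu ν V hHecke hν_idem hν_orth hV_class hV_one hcov hν_sa hV_star d]
    · apply Subtype.ext
      rw [hcomp (ν c ξ) d, if_neg hdc]
      show (Aop ν V d * ν c) ξ = ((0 : ↥K) : E)
      rw [hAnuz ν V hHecke hν_idem hν_orth hV_class hV_one hcov hν_sa hV_star hdc]
      simp
  · intro a ξ d
    apply Subtype.ext
    rw [hcomp (V a ξ) d]
    have hfinA : (Function.support fun u : G ⧸ H =>
        (if Quotient.out u ∈ dcos H a then
          Aop ν V (QuotientGroup.mk (Quotient.out d * Quotient.out u)) else 0)).Finite := by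
      refine (setFinite hHecke a).subset fun u hu => ?_
      rw [Function.mem_support] at hu
      by_contra h
      exact hu (if_neg h)
    have happ : Aop ν V d (V a ξ) =
        ∑ᶠ u : G ⧸ H, (if Quotient.out u ∈ dcos H a then
          Aop ν V (QuotientGroup.mk (Quotient.out d * Quotient.out u)) ξ else 0) := by
      calc Aop ν V d (V a ξ) = (Aop ν V d * V a) ξ := rfl
        _ = (∑ᶠ u : G ⧸ H, (if Quotient.out u ∈ dcos H a then
            Aop ν V (QuotientGroup.mk (Quotient.out d * Quotient.out u)) else 0)) ξ := by
            rw [keyA ν V hHecke hν_idem hν_orth hV_class hV_one hcov d a]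
        _ = ∑ᶠ u : G ⧸ H, ((if Quotient.out u ∈ dcos H a then
            Aop ν V (QuotientGroup.mk (Quotient.out d * Quotient.out u)) else 0) ξ) :=
            AddMonoidHom.map_finsum
              (AddMonoidHom.mk' (fun T : E →L[ℂ] E => T ξ) (fun T S => rfl)) hfinA
        _ = ∑ᶠ u : G ⧸ H, (if Quotient.out u ∈ dcos H a then
            Aop ν V (QuotientGroup.mk (Quotient.out d * Quotient.out u)) ξ else 0) := by
            refine finsum_congr fun u => ?_
            by_cases hc : Quotient.out u ∈ dcos H a <;> simp [hc]
    rw [happ]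
    have hfinK : (Function.support fun u : G ⧸ H =>
        (if Quotient.out u ∈ dcos H a then
          (Ψ ξ : ∀ _ : G ⧸ H, ↥K) (QuotientGroup.mk (Quotient.out d * Quotient.out u))
        else (0 : ↥K))).Finite := by
      refine (setFinite hHecke a).subset fun u hu => ?_
      rw [Function.mem_support] at hu
      by_contra h
      exact hu (if_neg h)
    have e3 := AddMonoidHom.map_finsum (K.subtype.toAddMonoidHom) hfinK
    refine Eq.trans ?_ e3.symm
    refine finsum_congr fun u => ?_
    by_cases hc : Quotient.out u ∈ dcos H a
    · rw [if_pos hc]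
      show Aop ν V (QuotientGroup.mk (Quotient.out d * Quotient.out u)) ξ =
        K.subtype.toAddMonoidHom (if Quotient.out u ∈ dcos H a then
          (Ψ ξ : ∀ _ : G ⧸ H, ↥K) (QuotientGroup.mk (Quotient.out d * Quotient.out u))
        else (0 : ↥K))
      rw [if_pos hc]
      exact (hcomp ξ _).symm
    · rw [if_neg hc]
      show (0 : E) = K.subtype.toAddMonoidHom (if Quotient.out u ∈ dcos H a then
          (Ψ ξ : ∀ _ : G ⧸ H, ↥K) (QuotientGroup.mk (Quotient.out d * Quotient.out u))
        else (0 : ↥K))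
      rw [if_neg hc]
      simp

end Fwd

section Bwd
set_option linter.unusedSectionVars false
set_option maxHeartbeats 1000000

theorem mem_dcos_inv {a b : G} (h : b ∈ dcos H a) : b⁻¹ ∈ dcos H a⁻¹ := by
  obtain ⟨h1, hh1, h2, hh2, rfl⟩ := mem_dcos.1 h
  exact mem_dcos.2 ⟨h2⁻¹, inv_mem hh2, h1⁻¹, inv_mem hh1, by group⟩

include hHecke in
theorem backward {H₀ : Type u} [NormedAddCommGroup H₀] [InnerProductSpace ℂ H₀]
    [CompleteSpace H₀] (Ψ : E ≃ₗᵢ[ℂ] lp (fun _ : G ⧸ H => H₀) 2)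
    (hM : ∀ (c : G ⧸ H) (ξ : E) (d : G ⧸ H),
      (Ψ (ν c ξ) : ∀ _ : G ⧸ H, H₀) d =
        if d = c then (Ψ ξ : ∀ _ : G ⧸ H, H₀) d else 0)
    (hR : ∀ (a : G) (ξ : E) (d : G ⧸ H),
      (Ψ (V a ξ) : ∀ _ : G ⧸ H, H₀) d =
        ∑ᶠ u : G ⧸ H,
          if Quotient.out u ∈ dcos H a then
            (Ψ ξ : ∀ _ : G ⧸ H, H₀)
              (QuotientGroup.mk (Quotient.out d * Quotient.out u))
          else 0) :
    ∀ a x b : G,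
      V a * ν (QuotientGroup.mk x) * V b =
        ∑ᶠ p : (G ⧸ H) × (G ⧸ H),
          if Quotient.out p.1 ∈ dcos H a⁻¹ ∧ Quotient.out p.2 ∈ dcos H b then
            ν (QuotientGroup.mk (x * Quotient.out p.1)) *
              V ((Quotient.out p.1)⁻¹ * Quotient.out p.2) *
              ν (QuotientGroup.mk (x * Quotient.out p.2))
          else 0 := by
  classical
  intro a x b
  ext ξ
  apply Ψ.injective
  apply lp.ext
  funext d
  -- LHS computation
  have hLHS : (Ψ ((V a * ν (QuotientGroup.mk x) * V b) ξ) : ∀ _ : G ⧸ H, H₀) d =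
      (if Quotient.out (QuotientGroup.mk ((Quotient.out d)⁻¹ * x) : G ⧸ H) ∈ dcos H a then
        ∑ᶠ v : G ⧸ H, (if Quotient.out v ∈ dcos H b then
          (Ψ ξ : ∀ _ : G ⧸ H, H₀)
            (QuotientGroup.mk (Quotient.out (QuotientGroup.mk x : G ⧸ H) * Quotient.out v))
          else 0)
      else 0) := by
    have e0 : (V a * ν (QuotientGroup.mk x) * V b) ξ =
        V a (ν (QuotientGroup.mk x) (V b ξ)) := rfl
    rw [e0, hR a (ν (QuotientGroup.mk x) (V b ξ)) d]
    have e1 : ∀ u : G ⧸ H,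
        (if Quotient.out u ∈ dcos H a then
          (Ψ (ν (QuotientGroup.mk x) (V b ξ)) : ∀ _ : G ⧸ H, H₀)
            (QuotientGroup.mk (Quotient.out d * Quotient.out u)) else 0) =
        (if Quotient.out u ∈ dcos H a then
          (if (QuotientGroup.mk (Quotient.out d * Quotient.out u) : G ⧸ H) =
              QuotientGroup.mk x then
            (Ψ (V b ξ) : ∀ _ : G ⧸ H, H₀)
              (QuotientGroup.mk (Quotient.out d * Quotient.out u)) else 0) else 0) :=
      fun u => by rw [hM]
    rw [finsum_congr e1, finsum_eq_single _
      (QuotientGroup.mk ((Quotient.out d)⁻¹ * x) : G ⧸ H) ?side1]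
    case side1 =>
      intro u hu
      by_cases hcond : Quotient.out u ∈ dcos H a
      · rw [if_pos hcond,
          if_neg (fun h => hu ((mk_mul_out_eq_iff (Quotient.out d) x u).1 h))]
      · rw [if_neg hcond]
    have hmk0 : (QuotientGroup.mk (Quotient.out d *
        Quotient.out (QuotientGroup.mk ((Quotient.out d)⁻¹ * x) : G ⧸ H)) : G ⧸ H) =
        QuotientGroup.mk x := (mk_mul_out_eq_iff (Quotient.out d) x _).2 rfl
    by_cases hca : Quotient.out (QuotientGroup.mk ((Quotient.out d)⁻¹ * x) : G ⧸ H) ∈ dcos H a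
    · rw [if_pos hca, if_pos hca, if_pos hmk0, hmk0, hR b ξ (QuotientGroup.mk x)]
    · rw [if_neg hca, if_neg hca]
  -- RHS computation
  have hfinP : (Function.support fun p : (G ⧸ H) × (G ⧸ H) =>
      (if Quotient.out p.1 ∈ dcos H a⁻¹ ∧ Quotient.out p.2 ∈ dcos H b then
        ν (QuotientGroup.mk (x * Quotient.out p.1)) *
          V ((Quotient.out p.1)⁻¹ * Quotient.out p.2) *
          ν (QuotientGroup.mk (x * Quotient.out p.2))
      else 0)).Finite := by
    refine (((setFinite hHecke a⁻¹).prod (setFinite hHecke b)).subset fun p hp => ?_)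
    rw [Function.mem_support] at hp
    by_contra hnot
    exact hp (if_neg fun hc => hnot ⟨hc.1, hc.2⟩)
  set q1 : G ⧸ H := QuotientGroup.mk (x⁻¹ * Quotient.out d) with hq1
  have hVal : ∀ u : G ⧸ H,
      (Ψ (V ((Quotient.out q1)⁻¹ * Quotient.out u)
        (ν (QuotientGroup.mk (x * Quotient.out u)) ξ)) : ∀ _ : G ⧸ H, H₀) d =
      (Ψ ξ : ∀ _ : G ⧸ H, H₀) (QuotientGroup.mk (x * Quotient.out u)) := by
    intro u
    rw [hR ((Quotient.out q1)⁻¹ * Quotient.out u)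
      (ν (QuotientGroup.mk (x * Quotient.out u)) ξ) d]
    have e6 : ∀ w : G ⧸ H,
        (if Quotient.out w ∈ dcos H ((Quotient.out q1)⁻¹ * Quotient.out u) then
          (Ψ (ν (QuotientGroup.mk (x * Quotient.out u)) ξ) : ∀ _ : G ⧸ H, H₀)
            (QuotientGroup.mk (Quotient.out d * Quotient.out w)) else 0) =
        (if Quotient.out w ∈ dcos H ((Quotient.out q1)⁻¹ * Quotient.out u) then
          (if (QuotientGroup.mk (Quotient.out d * Quotient.out w) : G ⧸ H) =
              QuotientGroup.mk (x * Quotient.out u) then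
            (Ψ ξ : ∀ _ : G ⧸ H, H₀)
              (QuotientGroup.mk (Quotient.out d * Quotient.out w)) else 0) else 0) :=
      fun w => by rw [hM]
    rw [finsum_congr e6, finsum_eq_single _
      (QuotientGroup.mk ((Quotient.out d)⁻¹ * (x * Quotient.out u)) : G ⧸ H) ?side2]
    case side2 =>
      intro w hw
      by_cases hcw : Quotient.out w ∈ dcos H ((Quotient.out q1)⁻¹ * Quotient.out u)
      · rw [if_pos hcw, if_neg (fun h => hw
          ((mk_mul_out_eq_iff (Quotient.out d) (x * Quotient.out u) w).1 h))]
      · rw [if_neg hcw]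
    obtain ⟨h1, hh1, e5⟩ := eq_mk_iff_out_mem.1 hq1
    have hmem1 : (Quotient.out d)⁻¹ * (x * Quotient.out u) ∈
        dcos H ((Quotient.out q1)⁻¹ * Quotient.out u) :=
      mem_dcos.2 ⟨h1, hh1, 1, one_mem _, by rw [e5]; group⟩
    have houter : Quotient.out (QuotientGroup.mk
        ((Quotient.out d)⁻¹ * (x * Quotient.out u)) : G ⧸ H) ∈
        dcos H ((Quotient.out q1)⁻¹ * Quotient.out u) :=
      mem_dcos_of_mem hmem1 (out_mk_mem_dcos _)
    have hinner : (QuotientGroup.mk (Quotient.out d *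
        Quotient.out (QuotientGroup.mk
          ((Quotient.out d)⁻¹ * (x * Quotient.out u)) : G ⧸ H)) : G ⧸ H) =
        QuotientGroup.mk (x * Quotient.out u) :=
      (mk_mul_out_eq_iff (Quotient.out d) (x * Quotient.out u) _).2 rfl
    rw [if_pos houter, if_pos hinner, hinner]
  have hRHS : (Ψ ((∑ᶠ p : (G ⧸ H) × (G ⧸ H),
      if Quotient.out p.1 ∈ dcos H a⁻¹ ∧ Quotient.out p.2 ∈ dcos H b then
        ν (QuotientGroup.mk (x * Quotient.out p.1)) *
          V ((Quotient.out p.1)⁻¹ * Quotient.out p.2) *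
          ν (QuotientGroup.mk (x * Quotient.out p.2))
      else 0) ξ) : ∀ _ : G ⧸ H, H₀) d =
      (if Quotient.out q1 ∈ dcos H a⁻¹ then
        ∑ᶠ u : G ⧸ H, (if Quotient.out u ∈ dcos H b then
          (Ψ ξ : ∀ _ : G ⧸ H, H₀) (QuotientGroup.mk (x * Quotient.out u)) else 0)
      else 0) := by
    have hφ : ∀ (T S : E →L[ℂ] E),
        (Ψ ((T + S) ξ) : ∀ _ : G ⧸ H, H₀) d =
          (Ψ (T ξ) : ∀ _ : G ⧸ H, H₀) d + (Ψ (S ξ) : ∀ _ : G ⧸ H, H₀) d := by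
      intro T S
      have e7 : (T + S) ξ = T ξ + S ξ := rfl
      rw [e7, map_add, lp.coeFn_add]
      rfl
    have e2 := AddMonoidHom.map_finsum
      (AddMonoidHom.mk' (fun T : E →L[ℂ] E => (Ψ (T ξ) : ∀ _ : G ⧸ H, H₀) d) hφ) hfinP
    refine Eq.trans e2 ?_
    have e3 : ∀ p : (G ⧸ H) × (G ⧸ H),
        (Ψ ((if Quotient.out p.1 ∈ dcos H a⁻¹ ∧ Quotient.out p.2 ∈ dcos H b then
          ν (QuotientGroup.mk (x * Quotient.out p.1)) *
            V ((Quotient.out p.1)⁻¹ * Quotient.out p.2) *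
            ν (QuotientGroup.mk (x * Quotient.out p.2))
        else 0) ξ) : ∀ _ : G ⧸ H, H₀) d =
        (if (Quotient.out p.1 ∈ dcos H a⁻¹ ∧ Quotient.out p.2 ∈ dcos H b) ∧ p.1 = q1 then
          (Ψ (V ((Quotient.out q1)⁻¹ * Quotient.out p.2)
            (ν (QuotientGroup.mk (x * Quotient.out p.2)) ξ)) : ∀ _ : G ⧸ H, H₀) d
        else 0) := by
      intro p
      by_cases hC : Quotient.out p.1 ∈ dcos H a⁻¹ ∧ Quotient.out p.2 ∈ dcos H b
      · rw [if_pos hC]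
        have e4 : (ν (QuotientGroup.mk (x * Quotient.out p.1)) *
            V ((Quotient.out p.1)⁻¹ * Quotient.out p.2) *
            ν (QuotientGroup.mk (x * Quotient.out p.2))) ξ =
            ν (QuotientGroup.mk (x * Quotient.out p.1))
              (V ((Quotient.out p.1)⁻¹ * Quotient.out p.2)
                (ν (QuotientGroup.mk (x * Quotient.out p.2)) ξ)) := rfl
        rw [e4, hM]
        have hiff : ((d : G ⧸ H) = QuotientGroup.mk (x * Quotient.out p.1)) ↔ p.1 = q1 := by
          rw [eq_comm]
          conv_lhs => rw [← QuotientGroup.out_eq' d]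
          rw [mk_mul_out_eq_iff x (Quotient.out d) p.1, ← hq1]
        by_cases hp1 : p.1 = q1
        · rw [if_pos (hiff.2 hp1), if_pos ⟨hC, hp1⟩, hp1]
        · rw [if_neg (fun h => hp1 (hiff.1 h)), if_neg (fun h => hp1 h.2)]
      · rw [if_neg hC, if_neg (fun h : _ ∧ _ => hC h.1)]
        have e8 : ((0 : E →L[ℂ] E) ξ) = (0 : E) := rfl
        rw [e8, map_zero]
        exact congrFun (lp.coeFn_zero (fun _ : G ⧸ H => H₀) 2) d
    refine Eq.trans (finsum_congr e3) ?_
    refine Eq.trans (finsum_prod_slice _ q1 ?hslice) ?_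
    case hslice =>
      intro p hp
      by_contra hne
      exact hp (if_neg (fun h => hne h.2))
    by_cases hqa : Quotient.out q1 ∈ dcos H a⁻¹
    · rw [if_pos hqa]
      refine finsum_congr fun u => ?_
      by_cases hub : Quotient.out u ∈ dcos H b
      · rw [if_pos ⟨⟨hqa, hub⟩, rfl⟩, if_pos hub, hVal u]
      · rw [if_neg (fun h => hub h.1.2), if_neg hub]
    · rw [if_neg hqa]
      refine finsum_eq_zero_of_forall_eq_zero fun u => ?_
      rw [if_neg (fun h => hqa h.1.1)]
  rw [hLHS, hRHS]
  have hcondiff : Quotient.out (QuotientGroup.mk ((Quotient.out d)⁻¹ * x) : G ⧸ H) ∈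
      dcos H a ↔ Quotient.out q1 ∈ dcos H a⁻¹ := by
    rw [hq1, out_mk_mem_dcos_iff, out_mk_mem_dcos_iff]
    constructor
    · intro h
      have h2 := mem_dcos_inv h
      rwa [mul_inv_rev, inv_inv] at h2
    · intro h
      have h2 := mem_dcos_inv h
      rwa [mul_inv_rev, inv_inv, inv_inv] at h2
  have hreindex : (∑ᶠ v : G ⧸ H, (if Quotient.out v ∈ dcos H b then
        (Ψ ξ : ∀ _ : G ⧸ H, H₀)
          (QuotientGroup.mk (Quotient.out (QuotientGroup.mk x : G ⧸ H) * Quotient.out v))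
        else 0)) =
      ∑ᶠ u : G ⧸ H, (if Quotient.out u ∈ dcos H b then
        (Ψ ξ : ∀ _ : G ⧸ H, H₀) (QuotientGroup.mk (x * Quotient.out u)) else 0) := by
    obtain ⟨k, hk, hxk⟩ :=
      eq_mk_iff_out_mem.1 (rfl : (QuotientGroup.mk x : G ⧸ H) = QuotientGroup.mk x)
    have hcancel : ∀ (k' : G), k' ∈ H → ∀ v : G ⧸ H,
        QuotientGroup.mk (k'⁻¹ *
          Quotient.out (QuotientGroup.mk (k' * Quotient.out v) : G ⧸ H)) = v := by
      intro k' hk' v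
      obtain ⟨h', hh', e⟩ := eq_mk_iff_out_mem.1
        (rfl : (QuotientGroup.mk (k' * Quotient.out v) : G ⧸ H) = _)
      rw [e, show k'⁻¹ * (k' * Quotient.out v * h') = Quotient.out v * h' by group,
        QuotientGroup.mk_mul_of_mem _ hh', QuotientGroup.out_eq']
    let σ : (G ⧸ H) ≃ (G ⧸ H) :=
      { toFun := fun v => QuotientGroup.mk (k * Quotient.out v)
        invFun := fun u => QuotientGroup.mk (k⁻¹ * Quotient.out u)
        left_inv := hcancel k hk
        right_inv := fun u => by
          have h9 := hcancel k⁻¹ (inv_mem hk) u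
          rwa [inv_inv] at h9 }
    conv_rhs => rw [← finsum_comp_equiv σ]
    refine finsum_congr fun v => ?_
    obtain ⟨h', hh', hσv⟩ := eq_mk_iff_out_mem.1
      (rfl : (σ v : G ⧸ H) = QuotientGroup.mk (k * Quotient.out v))
    have hcondeq : (Quotient.out (σ v) ∈ dcos H b) ↔ (Quotient.out v ∈ dcos H b) :=
      mem_dcos_iff_of_mem (mem_dcos.2 ⟨k, hk, h', hh', hσv⟩)
    have hvaleq : (QuotientGroup.mk (x * Quotient.out (σ v)) : G ⧸ H) =
        QuotientGroup.mk (Quotient.out (QuotientGroup.mk x : G ⧸ H) * Quotient.out v) := by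
      conv_rhs => rw [hxk]
      rw [hσv, show x * (k * Quotient.out v * h') = x * k * Quotient.out v * h' by group,
        QuotientGroup.mk_mul_of_mem _ hh']
    by_cases hvb : Quotient.out v ∈ dcos H b
    · rw [if_pos hvb, if_pos (hcondeq.2 hvb), hvaleq]
    · rw [if_neg hvb, if_neg (fun h => hvb (hcondeq.1 h))]
  by_cases hc2 : Quotient.out q1 ∈ dcos H a⁻¹
  · rw [if_pos (hcondiff.2 hc2), if_pos hc2, hreindex]
  · rw [if_neg (fun h => hc2 (hcondiff.1 h)), if_neg hc2]

end Bwd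
end Ops
end HeckeAux

/-- Theorem 1.5(ii): `(ν, V)` is a covariant pair for the discrete Hecke pair `(G,H)` iff
there is a Hilbert space `ℋ₀` and a unitary `Ψ : ℋ ≃ ℋ₀ ⊗ ℓ²(G/H)`
(realised as `ℓ²(G/H; ℋ₀)`) intertwining `ν` with `1 ⊗ M` and `V` with `1 ⊗ ρ`. -/
theorem stmt13 {E : Type u} [NormedAddCommGroup E] [InnerProductSpace ℂ E] [CompleteSpace E]
    (H : Subgroup G) (hHecke : IsHeckePair H)
    (ν : G ⧸ H → E →L[ℂ] E) (V : G → E →L[ℂ] E)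
    (hν_sa : ∀ c, IsSelfAdjoint (ν c)) (hν_idem : ∀ c, ν c * ν c = ν c)
    (hν_orth : ∀ c d, c ≠ d → ν c * ν d = 0)
    (hν_nd : (⨆ c : G ⧸ H, LinearMap.range (ν c : E →ₗ[ℂ] E)).topologicalClosure = ⊤)
    (hV_class : ∀ a b : G, b ∈ dcos H a → V b = V a)
    (hV_one : V 1 = 1) (hV_star : ∀ a : G, star (V a) = V a⁻¹)
    (hV_mul : ∀ a b : G, V a * V b =
      ∑ᶠ c : DoubleCoset.Quotient (H : Set G) (H : Set G),
        (Nat.card ↥{d : G ⧸ H | Quotient.out d ∈ dcos H a ∧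
            (Quotient.out d)⁻¹ * Quotient.out c ∈ dcos H b} : ℂ) • V (Quotient.out c)) :
    -- `(ν, V)` is a covariant pair …
    (∀ a x b : G,
      V a * ν (QuotientGroup.mk x) * V b =
        ∑ᶠ p : (G ⧸ H) × (G ⧸ H),
          if Quotient.out p.1 ∈ dcos H a⁻¹ ∧ Quotient.out p.2 ∈ dcos H b then
            ν (QuotientGroup.mk (x * Quotient.out p.1)) *
              V ((Quotient.out p.1)⁻¹ * Quotient.out p.2) *
              ν (QuotientGroup.mk (x * Quotient.out p.2))
          else 0)
    ↔
    -- … iff `(ν, V)` is unitarily equivalent to `(1 ⊗ M, 1 ⊗ ρ)`.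
    (∃ (H₀ : Type u) (_ : NormedAddCommGroup H₀) (_ : InnerProductSpace ℂ H₀)
        (_ : CompleteSpace H₀) (Ψ : E ≃ₗᵢ[ℂ] lp (fun _ : G ⧸ H => H₀) 2),
      (∀ (c : G ⧸ H) (ξ : E) (d : G ⧸ H),
        (Ψ (ν c ξ) : ∀ _ : G ⧸ H, H₀) d =
          if d = c then (Ψ ξ : ∀ _ : G ⧸ H, H₀) d else 0) ∧
      (∀ (a : G) (ξ : E) (d : G ⧸ H),
        (Ψ (V a ξ) : ∀ _ : G ⧸ H, H₀) d =
          ∑ᶠ u : G ⧸ H,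
            if Quotient.out u ∈ dcos H a then
              (Ψ ξ : ∀ _ : G ⧸ H, H₀)
                (QuotientGroup.mk (Quotient.out d * Quotient.out u))
            else 0)) := by
  constructor
  · intro hcov
    exact HeckeAux.forward ν V hHecke hν_idem hν_orth hV_class hV_one hcov hν_sa hV_star hν_nd
  · rintro ⟨H₀, i1, i2, i3, Ψ, hMc, hRc⟩
    letI := i1; letI := i2; letI := i3
    exact HeckeAux.backward ν V hHecke Ψ hMc hRc
end

section
/- Let $G = N \rtimes Q$ with $Q = S^{-1}S$ for an Ore semigroup $S$ acting on $N$, and let $H \trianglelefteq N$ satisfy $sH = HsH$ and $|H\backslash HsH| < \infty$ for all $s \in S$. Then for each $s \in S$: $[HsH]\cdot[Hs^{-1}H] = \chi_{sHs^{-1}}$ in the Hecke algebra $\mathcal{H}(G,H)$, i.e. $[HsH][Hs^{-1}H] = \sum_{mH \subseteq sHs^{-1}H} [HmH]$, a sum over the left cosets of $H$ in $N$ contained in $sHs^{-1}H$. -/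
open scoped Classical Pointwise

variable {G : Type*} [Group G]

/-- In the Laca–Larsen setting (`G = N ⋊ Q`, `Q = S⁻¹S` for an Ore semigroup `S`,
`H ⊴ N` with `sH = HsH` and `R(s) < ∞` for `s ∈ S`), for each `s ∈ S` one has
`[HsH]⋅[Hs⁻¹H] = χ_{sHs⁻¹} = ∑_{mH ⊆ sHs⁻¹H} [HmH]` in the Hecke algebra,
expressed pointwise via the convolution formula. -/
theorem stmt14
    (N Q H : Subgroup G) (hNnormal : N.Normal)
    (hsd1 : N ⊓ Q = ⊥) (hsd2 : N ⊔ Q = ⊤)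
    (S : Subsemigroup G) (hSQ : (S : Set G) ⊆ (Q : Set G))
    (hOre : ∀ s t : S, ∃ u v : S, (u : G) * s = (v : G) * t)
    (hQS : ∀ q ∈ Q, ∃ s ∈ S, ∃ t ∈ S, q = s⁻¹ * t)
    (hHN : H ≤ N) (hHnormN : ∀ n ∈ N, ∀ h ∈ H, n * h * n⁻¹ ∈ H)
    (hsH : ∀ s ∈ S, (fun h => s * h) '' (H : Set G) = dcos H s)
    (hHecke : IsHeckePair H)
    (s : G) (hsS : s ∈ S) :
    ∀ x : G,
      (∑ᶠ d : G ⧸ H,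
          if Quotient.out d ∈ dcos H s ∧ (Quotient.out d)⁻¹ * x ∈ dcos H s⁻¹ then
            (1 : ℂ) else 0)
        = ∑ᶠ d : G ⧸ H,
            if Quotient.out d ∈ {g : G | ∃ h ∈ H, ∃ k ∈ H, g = s * h * s⁻¹ * k} ∧
                x ∈ dcos H (Quotient.out d) then (1 : ℂ) else 0 := by
  intro x
  -- Fact A: s⁻¹ h s ∈ H for h ∈ H (from sH = HsH)
  have hA : ∀ h ∈ H, s⁻¹ * h * s ∈ H := by
    intro h hh
    have hmem : h * s ∈ dcos H s :=
      DoubleCoset.mem_doubleCoset.mpr ⟨h, hh, 1, H.one_mem, by group⟩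
    rw [← hsH s hsS] at hmem
    obtain ⟨h', hh', heq⟩ := hmem
    have heq' : s * h' = h * s := heq
    have : s⁻¹ * h * s = h' := by rw [mul_assoc, ← heq']; group
    rwa [this]
  -- h₀ : the defect of out ⟦s⟧
  set d0 : G ⧸ H := QuotientGroup.mk s with hd0
  have h0mem : s⁻¹ * (Quotient.out d0) ∈ H := QuotientGroup.eq.mp (QuotientGroup.out_eq' d0).symm
  set h0 : G := s⁻¹ * Quotient.out d0 with hh0
  have houtd0 : Quotient.out d0 = s * h0 := by rw [hh0]; group
  set dx : G ⧸ H := QuotientGroup.mk x with hdx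
  have hxmem : x⁻¹ * (Quotient.out dx) ∈ H := QuotientGroup.eq.mp (QuotientGroup.out_eq' dx).symm
  set hx : G := x⁻¹ * Quotient.out dx with hhx
  have houtdx : Quotient.out dx = x * hx := by rw [hhx]; group
  rw [finsum_eq_single _ d0 ?_, finsum_eq_single _ dx ?_]
  · -- equality of the two remaining terms
    refine if_congr ?_ rfl rfl
    constructor
    · rintro ⟨-, hc⟩
      obtain ⟨h, hh, k, hk, heq⟩ := DoubleCoset.mem_doubleCoset.mp hc
      have hxe : x = s * (h0 * h) * s⁻¹ * k := by
        have : (Quotient.out d0)⁻¹ * x = h * s⁻¹ * k := heq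
        rw [houtd0] at this
        calc x = (s * h0) * ((s * h0)⁻¹ * x) := by group
        _ = (s * h0) * (h * s⁻¹ * k) := by rw [this]
        _ = s * (h0 * h) * s⁻¹ * k := by group
      refine ⟨⟨h0 * h, H.mul_mem h0mem hh, k * hx, H.mul_mem hk hxmem, ?_⟩, ?_⟩
      · rw [houtdx, hxe]; group
      · exact DoubleCoset.mem_doubleCoset.mpr ⟨1, H.one_mem, hx⁻¹, H.inv_mem hxmem, by rw [houtdx]; group⟩
    · rintro ⟨⟨h, hh, k, hk, heq⟩, -⟩
      refine ⟨DoubleCoset.mem_doubleCoset.mpr ⟨1, H.one_mem, h0, h0mem, by rw [houtd0]; group⟩, ?_⟩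
      refine DoubleCoset.mem_doubleCoset.mpr ⟨h0⁻¹ * h, H.mul_mem (H.inv_mem h0mem) hh,
        k * hx⁻¹, H.mul_mem hk (H.inv_mem hxmem), ?_⟩
      have hxe : x = s * h * s⁻¹ * (k * hx⁻¹) := by
        have : x * hx = s * h * s⁻¹ * k := by rw [← houtdx, heq]
        calc x = (x * hx) * hx⁻¹ := by group
        _ = s * h * s⁻¹ * k * hx⁻¹ := by rw [this]
        _ = s * h * s⁻¹ * (k * hx⁻¹) := by group
      rw [houtd0, hxe]; group
  · -- RHS: all other terms vanish
    intro d hd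
    rw [if_neg]
    rintro ⟨⟨h, hh, k, hk, heq⟩, hc⟩
    obtain ⟨h1, hh1, h2, hh2, hxeq⟩ := DoubleCoset.mem_doubleCoset.mp hc
    apply hd
    set m := Quotient.out d with hm
    have hmN : m ∈ N := by
      rw [heq]
      exact N.mul_mem (hNnormal.conj_mem _ (hHN hh) s) (hHN hk)
    have : x⁻¹ * m = h2⁻¹ * (m⁻¹ * h1⁻¹ * (m⁻¹)⁻¹) := by rw [hxeq]; group
    have hxm : x⁻¹ * m ∈ H := by
      rw [this]
      exact H.mul_mem (H.inv_mem hh2) (hHnormN m⁻¹ (N.inv_mem hmN) h1⁻¹ (H.inv_mem hh1))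
    rw [← QuotientGroup.out_eq' d, hdx]
    exact (QuotientGroup.eq.mpr hxm).symm
  · -- LHS: all other terms vanish
    intro d hd
    rw [if_neg]
    rintro ⟨hc, -⟩
    obtain ⟨h, hh, k, hk, heq⟩ := DoubleCoset.mem_doubleCoset.mp hc
    apply hd
    rw [← QuotientGroup.out_eq' d, heq, hd0]
    exact QuotientGroup.eq.mpr (by
      have : (h * s * k)⁻¹ * s = k⁻¹ * (s⁻¹ * h⁻¹ * s) := by group
      rw [this]
      exact H.mul_mem (H.inv_mem hk) (hA h⁻¹ (H.inv_mem hh)))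
end

section
/- In the setting $G = N \rtimes Q$, $Q = S^{-1}S$, $H \trianglelefteq N$ with $sH = HsH$ and $R(s) < \infty$ for $s \in S$: for $s, t \in S$ and $n \in N$, the Hecke algebra satisfies $[Hs^{-1}H]\cdot[HnH]\cdot[HtH] = \frac{R(t)}{R(s^{-1}t)}[Hs^{-1}ntH]$. -/
open scoped Classical Pointwise

variable {G : Type*} [Group G]

section AuxLemmas

lemma mem_dcos_s15 {H : Subgroup G} {a x : G} :
    x ∈ dcos H a ↔ ∃ h₁ ∈ H, ∃ h₂ ∈ H, x = h₁ * a * h₂ := DoubleCoset.mem_doubleCoset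

lemma self_mem_dcos {H : Subgroup G} {a : G} : a ∈ dcos H a :=
  mem_dcos_s15.2 ⟨1, one_mem _, 1, one_mem _, by simp⟩

lemma dcos_mul_right {H : Subgroup G} {a x : G} (hx : x ∈ dcos H a) {h : G} (hh : h ∈ H) :
    x * h ∈ dcos H a := by
  obtain ⟨h₁, h1, h₂, h2, rfl⟩ := mem_dcos_s15.1 hx
  exact mem_dcos_s15.2 ⟨h₁, h1, h₂ * h, mul_mem h2 hh, by group⟩

lemma mem_dcos_iff_right {H : Subgroup G} {a : G} (ha : ∀ h ∈ H, a * h * a⁻¹ ∈ H) {x : G} :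
    x ∈ dcos H a ↔ x * a⁻¹ ∈ H := by
  constructor
  · rintro hx
    obtain ⟨h₁, h1, h₂, h2, rfl⟩ := mem_dcos_s15.1 hx
    have : h₁ * a * h₂ * a⁻¹ = h₁ * (a * h₂ * a⁻¹) := by group
    rw [this]
    exact mul_mem h1 (ha _ h2)
  · intro hx
    have : x = (x * a⁻¹) * a * 1 := by group
    exact mem_dcos_s15.2 ⟨_, hx, 1, one_mem _, this⟩

lemma mem_dcos_iff_left {H : Subgroup G} {a : G} (ha : ∀ h ∈ H, a⁻¹ * h * a ∈ H) {x : G} :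
    x ∈ dcos H a ↔ a⁻¹ * x ∈ H := by
  constructor
  · rintro hx
    obtain ⟨h₁, h1, h₂, h2, rfl⟩ := mem_dcos_s15.1 hx
    have : a⁻¹ * (h₁ * a * h₂) = (a⁻¹ * h₁ * a) * h₂ := by group
    rw [this]
    exact mul_mem (ha _ h1) h2
  · intro hx
    have : x = 1 * a * (a⁻¹ * x) := by group
    exact mem_dcos_s15.2 ⟨1, one_mem _, _, hx, this⟩

/-- `gHg⁻¹`. -/
def conjSub (H : Subgroup G) (g : G) : Subgroup G := H.map (MulAut.conj g).toMonoidHom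

lemma mem_conjSub {H : Subgroup G} {g x : G} : x ∈ conjSub H g ↔ g⁻¹ * x * g ∈ H := by
  simp only [conjSub, Subgroup.mem_map, MulEquiv.coe_toMonoidHom, MulAut.conj_apply]
  constructor
  · rintro ⟨h, hh, rfl⟩
    have : g⁻¹ * (g * h * g⁻¹) * g = h := by group
    rw [this]; exact hh
  · intro hx
    exact ⟨g⁻¹ * x * g, hx, by group⟩

lemma conjSub_conjSub {H : Subgroup G} (a b : G) :
    conjSub (conjSub H b) a = conjSub H (a * b) := by
  ext x
  simp only [mem_conjSub]
  constructor <;> intro hx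
  · have : (a * b)⁻¹ * x * (a * b) = b⁻¹ * (a⁻¹ * x * a) * b := by group
    rw [this]; exact hx
  · have : b⁻¹ * (a⁻¹ * x * a) * b = (a * b)⁻¹ * x * (a * b) := by group
    rw [this]; exact hx

lemma comap_conj_eq (g : G) (X : Subgroup G) :
    X.comap (MulAut.conj g).toMonoidHom = conjSub X g⁻¹ := by
  ext x
  simp only [Subgroup.mem_comap, MulEquiv.coe_toMonoidHom, MulAut.conj_apply, mem_conjSub, inv_inv]

lemma finsum_indicator_card {α : Type*} (p : Set α) (hp : p.Finite) :
    (∑ᶠ a, Set.indicator p (fun _ => (1 : ℂ)) a) = (Nat.card p : ℂ) := by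
  classical
  calc (∑ᶠ a, Set.indicator p (fun _ => (1 : ℂ)) a)
      = ∑ᶠ a ∈ p, (1 : ℂ) := (finsum_mem_def p _).symm
    _ = ∑ᶠ a ∈ (hp.toFinset : Set α), (1 : ℂ) := by rw [hp.coe_toFinset]
    _ = ∑ a ∈ hp.toFinset, (1 : ℂ) := finsum_mem_coe_finset _ _
    _ = (hp.toFinset.card : ℂ) := by simp
    _ = (Nat.card p : ℂ) := by rw [Nat.card_eq_card_finite_toFinset hp]

lemma Rcount_eq_relindex (H : Subgroup G) (a : G) :
    Rcount H a = (conjSub H a⁻¹).relIndex H := by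
  classical
  set K' : Subgroup H := (conjSub H a⁻¹).subgroupOf H with hK'
  have hmemK' : ∀ h : H, h ∈ K' ↔ a * (h : G) * a⁻¹ ∈ H := by
    intro h
    rw [hK', Subgroup.mem_subgroupOf, mem_conjSub, inv_inv]
  have hmem : ∀ h : H, a * (h : G) ∈ dcos H a := fun h => dcos_mul_right self_mem_dcos h.2
  let φ : H → rightCosetsIn H a := fun h =>
    ⟨Quotient.mk (QuotientGroup.rightRel H) (a * (h : G)), ⟨a * h, hmem h, rfl⟩⟩
  have hsound : ∀ h₁ h₂ : H, (QuotientGroup.rightRel K') h₁ h₂ → φ h₁ = φ h₂ := by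
    intro h₁ h₂ hr
    rw [QuotientGroup.rightRel_apply] at hr
    rw [hmemK'] at hr
    apply Subtype.ext
    apply Quotient.sound
    refine QuotientGroup.rightRel_apply.mpr ?_
    have : a * (h₂ : G) * (a * (h₁ : G))⁻¹ = a * ((h₂ : G) * (h₁ : G)⁻¹) * a⁻¹ := by group
    rw [this]
    exact_mod_cast hr
  let Φ : Quotient (QuotientGroup.rightRel K') → rightCosetsIn H a :=
    Quotient.lift φ hsound
  have hbij : Function.Bijective Φ := by
    constructor
    · refine Quotient.ind fun h₁ => Quotient.ind fun h₂ => ?_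
      intro hEq
      have h' : φ h₁ = φ h₂ := hEq
      have h'' := Subtype.ext_iff.1 h'
      have h3 := QuotientGroup.rightRel_apply.mp (Quotient.exact h'')
      apply Quotient.sound
      refine QuotientGroup.rightRel_apply.mpr ?_
      rw [hmemK']
      have : a * ((h₂ : G) * (h₁ : G)⁻¹) * a⁻¹ = a * (h₂ : G) * (a * (h₁ : G))⁻¹ := by group
      rw [Subgroup.coe_mul, Subgroup.coe_inv, this]
      exact h3
    · rintro ⟨q, hq⟩
      obtain ⟨y, hy, rfl⟩ := hq
      obtain ⟨h₁, hh1, h₂, hh2, rfl⟩ := mem_dcos_s15.1 hy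
      refine ⟨Quotient.mk _ ⟨h₂, hh2⟩, ?_⟩
      apply Subtype.ext
      apply Quotient.sound
      refine QuotientGroup.rightRel_apply.mpr ?_
      have : h₁ * a * h₂ * (a * h₂)⁻¹ = h₁ := by group
      rw [this]; exact hh1
  have h1 : Rcount H a = Nat.card (Quotient (QuotientGroup.rightRel K')) :=
    (Nat.card_congr (Equiv.ofBijective Φ hbij)).symm
  rw [h1]
  have h2 : Nat.card (Quotient (QuotientGroup.rightRel K')) = Nat.card (H ⧸ K') :=
    Nat.card_congr (QuotientGroup.quotientRightRelEquivQuotientLeftRel K')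
  rw [h2]
  rfl

end AuxLemmas

/-- In the Laca–Larsen setting, for `s, t ∈ S` and `n ∈ N` the Hecke algebra satisfies
`[Hs⁻¹H]⋅[HnH]⋅[HtH] = (R(t)/R(s⁻¹t))⋅[Hs⁻¹ntH]`, expressed pointwise via the
(iterated) convolution formula. -/
theorem stmt15
    (N Q H : Subgroup G) (hNnormal : N.Normal)
    (hsd1 : N ⊓ Q = ⊥) (hsd2 : N ⊔ Q = ⊤)
    (S : Subsemigroup G) (hSQ : (S : Set G) ⊆ (Q : Set G))
    (hOre : ∀ s t : S, ∃ u v : S, (u : G) * s = (v : G) * t)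
    (hQS : ∀ q ∈ Q, ∃ s ∈ S, ∃ t ∈ S, q = s⁻¹ * t)
    (hHN : H ≤ N) (hHnormN : ∀ n ∈ N, ∀ h ∈ H, n * h * n⁻¹ ∈ H)
    (hsH : ∀ s ∈ S, (fun h => s * h) '' (H : Set G) = dcos H s)
    (hHecke : IsHeckePair H)
    (s t : G) (hsS : s ∈ S) (htS : t ∈ S) (n : G) (hn : n ∈ N) :
    ∀ x : G,
      (∑ᶠ d : G ⧸ H,
          (∑ᶠ e : G ⧸ H,
              if Quotient.out e ∈ dcos H s⁻¹ ∧
                  (Quotient.out e)⁻¹ * Quotient.out d ∈ dcos H n then (1 : ℂ) else 0) *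
            (if (Quotient.out d)⁻¹ * x ∈ dcos H t then (1 : ℂ) else 0))
        = ((Rcount H t : ℂ) / (Rcount H (s⁻¹ * t) : ℂ)) *
            (if x ∈ dcos H (s⁻¹ * n * t) then 1 else 0) := by
  classical
  -- basic conjugation facts
  have hs1 : ∀ h ∈ H, s⁻¹ * h * s ∈ H := by
    intro h hh
    have hmem : h * s ∈ dcos H s := mem_dcos_s15.2 ⟨h, hh, 1, one_mem _, by group⟩
    rw [← hsH s hsS] at hmem
    obtain ⟨h', hh', heq⟩ := hmem
    have heq' : s * h' = h * s := heq
    have : s⁻¹ * h * s = h' := by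
      have e2 : s⁻¹ * h * s = s⁻¹ * (h * s) := by group
      rw [e2, ← heq']; group
    rw [this]; exact hh'
  have ht1 : ∀ h ∈ H, t⁻¹ * h * t ∈ H := by
    intro h hh
    have hmem : h * t ∈ dcos H t := mem_dcos_s15.2 ⟨h, hh, 1, one_mem _, by group⟩
    rw [← hsH t htS] at hmem
    obtain ⟨h', hh', heq⟩ := hmem
    have heq' : t * h' = h * t := heq
    have : t⁻¹ * h * t = h' := by
      have e2 : t⁻¹ * h * t = t⁻¹ * (h * t) := by group
      rw [e2, ← heq']; group
    rw [this]; exact hh'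
  -- coset characterizations
  have RCn : ∀ y : G, y ∈ dcos H n ↔ y * n⁻¹ ∈ H := fun y =>
    mem_dcos_iff_right (hHnormN n hn)
  have hconj_sinv : ∀ h ∈ H, s⁻¹ * h * (s⁻¹)⁻¹ ∈ H := by
    intro h hh; rw [inv_inv]; exact hs1 h hh
  have RCsinv : ∀ y : G, y ∈ dcos H s⁻¹ ↔ y * s ∈ H := by
    intro y
    have := mem_dcos_iff_right hconj_sinv (x := y)
    rwa [inv_inv] at this
  have hconj_sn : ∀ h ∈ H, (s⁻¹ * n) * h * (s⁻¹ * n)⁻¹ ∈ H := by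
    intro h hh
    have h2 : s⁻¹ * (n * h * n⁻¹) * s ∈ H := hs1 _ (hHnormN n hn h hh)
    have : (s⁻¹ * n) * h * (s⁻¹ * n)⁻¹ = s⁻¹ * (n * h * n⁻¹) * s := by group
    rw [this]; exact h2
  have RCsn : ∀ y : G, y ∈ dcos H (s⁻¹ * n) ↔ y * (n⁻¹ * s) ∈ H := by
    intro y
    have := mem_dcos_iff_right hconj_sn (x := y)
    rwa [show (s⁻¹ * n)⁻¹ = n⁻¹ * s by group] at this
  have LCt : ∀ y : G, y ∈ dcos H t ↔ t⁻¹ * y ∈ H := fun y => mem_dcos_iff_left ht1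
  intro x
  -- Step A : the inner sum
  have stepA : ∀ d : G ⧸ H,
      (∑ᶠ e : G ⧸ H,
          if Quotient.out e ∈ dcos H s⁻¹ ∧
              (Quotient.out e)⁻¹ * Quotient.out d ∈ dcos H n then (1 : ℂ) else 0)
        = if Quotient.out d ∈ dcos H (s⁻¹ * n) then (1 : ℂ) else 0 := by
    intro d
    set a : G ⧸ H := QuotientGroup.mk (Quotient.out d * n⁻¹) with ha
    have hvan : ∀ e : G ⧸ H, e ≠ a →
        (if Quotient.out e ∈ dcos H s⁻¹ ∧
            (Quotient.out e)⁻¹ * Quotient.out d ∈ dcos H n then (1 : ℂ) else 0) = 0 := by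
      intro e hne
      rw [if_neg]
      rintro ⟨-, h2⟩
      apply hne
      have h3 : ((Quotient.out e)⁻¹ * Quotient.out d) * n⁻¹ ∈ H := (RCn _).1 h2
      have h4 : (Quotient.out e)⁻¹ * (Quotient.out d * n⁻¹) ∈ H := by
        have heq : (Quotient.out e)⁻¹ * (Quotient.out d * n⁻¹)
            = ((Quotient.out e)⁻¹ * Quotient.out d) * n⁻¹ := by group
        rw [heq]; exact h3
      calc e = QuotientGroup.mk (Quotient.out e) := (QuotientGroup.out_eq' e).symm
        _ = a := by rw [ha]; exact QuotientGroup.eq.mpr h4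
    rw [finsum_eq_single _ a hvan]
    have hmkeq : (QuotientGroup.mk (Quotient.out d * n⁻¹) : G ⧸ H)
        = QuotientGroup.mk (Quotient.out a) := by rw [QuotientGroup.out_eq' a, ha]
    have hya : (Quotient.out d * n⁻¹)⁻¹ * Quotient.out a ∈ H := QuotientGroup.eq.mp hmkeq
    have hout_a : Quotient.out a
        = Quotient.out d * n⁻¹ * ((Quotient.out d * n⁻¹)⁻¹ * Quotient.out a) := by group
    have hc2 : (Quotient.out a)⁻¹ * Quotient.out d ∈ dcos H n := by
      rw [RCn]
      have heq : (Quotient.out a)⁻¹ * Quotient.out d * n⁻¹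
          = ((Quotient.out d * n⁻¹)⁻¹ * Quotient.out a)⁻¹ := by group
      rw [heq]; exact inv_mem hya
    have hc1 : (Quotient.out a ∈ dcos H s⁻¹) ↔ Quotient.out d ∈ dcos H (s⁻¹ * n) := by
      rw [RCsinv, RCsn]
      constructor
      · intro h
        have key : Quotient.out d * (n⁻¹ * s)
            = (Quotient.out a * s) * (s⁻¹ * ((Quotient.out d * n⁻¹)⁻¹ * Quotient.out a)⁻¹ * s) := by
          group
        rw [key]; exact mul_mem h (hs1 _ (inv_mem hya))
      · intro h
        have key : Quotient.out a * s
            = (Quotient.out d * (n⁻¹ * s)) * (s⁻¹ * ((Quotient.out d * n⁻¹)⁻¹ * Quotient.out a) * s) := by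
          group
        rw [key]; exact mul_mem h (hs1 _ hya)
    rw [if_congr ((and_iff_left hc2).trans hc1) rfl rfl]
  -- Step B : the outer sum counts a finite set of cosets
  set Fx : Set (G ⧸ H) :=
    {d | Quotient.out d ∈ dcos H (s⁻¹ * n) ∧ (Quotient.out d)⁻¹ * x ∈ dcos H t} with hFx
  have hFsub : Fx ⊆ leftCosetsIn H (s⁻¹ * n) := by
    rintro d ⟨h1, -⟩
    exact ⟨Quotient.out d, h1, QuotientGroup.out_eq' d⟩
  have hFfin : Fx.Finite := (hHecke _).subset hFsub
  have key : (∑ᶠ d : G ⧸ H,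
          (∑ᶠ e : G ⧸ H,
              if Quotient.out e ∈ dcos H s⁻¹ ∧
                  (Quotient.out e)⁻¹ * Quotient.out d ∈ dcos H n then (1 : ℂ) else 0) *
            (if (Quotient.out d)⁻¹ * x ∈ dcos H t then (1 : ℂ) else 0))
      = (Nat.card Fx : ℂ) := by
    have h1 : ∀ d : G ⧸ H,
        (∑ᶠ e : G ⧸ H,
            if Quotient.out e ∈ dcos H s⁻¹ ∧
                (Quotient.out e)⁻¹ * Quotient.out d ∈ dcos H n then (1 : ℂ) else 0) *
          (if (Quotient.out d)⁻¹ * x ∈ dcos H t then (1 : ℂ) else 0)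
        = Fx.indicator (fun _ => (1 : ℂ)) d := by
      intro d
      rw [stepA d]
      by_cases hd : d ∈ Fx
      · obtain ⟨hP, hQ⟩ := hd
        rw [Set.indicator_of_mem (by exact ⟨hP, hQ⟩) (fun _ => (1 : ℂ)), if_pos hP, if_pos hQ,
          mul_one]
      · rw [Set.indicator_of_notMem hd]
        have hor : ¬(Quotient.out d ∈ dcos H (s⁻¹ * n)) ∨
            ¬((Quotient.out d)⁻¹ * x ∈ dcos H t) := by
          by_contra hc
          push_neg at hc
          exact hd ⟨hc.1, hc.2⟩
        rcases hor with h | h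
        · rw [if_neg h, zero_mul]
        · rw [if_neg h, mul_zero]
    rw [finsum_congr h1, finsum_indicator_card Fx hFfin]
  rw [key]
  by_cases hx : x ∈ dcos H (s⁻¹ * n * t)
  case neg =>
    have hFempty : Fx = ∅ := by
      ext d
      simp only [hFx, Set.mem_setOf_eq, Set.mem_empty_iff_false, iff_false, not_and]
      intro h1 h2
      apply hx
      have ha1 : Quotient.out d * (n⁻¹ * s) ∈ H := (RCsn _).1 h1
      have ha2 : t⁻¹ * ((Quotient.out d)⁻¹ * x) ∈ H := (LCt _).1 h2
      refine mem_dcos_s15.2 ⟨_, ha1, _, ha2, ?_⟩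
      group
    rw [hFempty, if_neg hx]
    simp
  case pos =>
    obtain ⟨h₀, hh₀, h₁, hh₁, hxeq⟩ := mem_dcos_s15.1 hx
    rw [if_pos hx, mul_one]
    set g : G := s⁻¹ * n * t with hg
    set Kg : Subgroup G := conjSub H s⁻¹ with hKg
    set M₀ : Subgroup G := conjSub H g ⊓ H with hM₀
    set A : Subgroup G := conjSub H t⁻¹ with hA
    set B' : Subgroup G := conjSub H (t⁻¹ * s) ⊓ H with hB'
    -- the assignment d ↦ h₀⁻¹ * (out d) * n⁻¹ * s lands in M₀
    have hmd : ∀ d : G ⧸ H, d ∈ Fx → h₀⁻¹ * Quotient.out d * n⁻¹ * s ∈ M₀ := by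
      rintro d ⟨h1, h2⟩
      have hd1 : Quotient.out d * (n⁻¹ * s) ∈ H := (RCsn _).1 h1
      have hd2 : t⁻¹ * ((Quotient.out d)⁻¹ * x) ∈ H := (LCt _).1 h2
      refine Subgroup.mem_inf.mpr ⟨?_, ?_⟩
      · refine mem_conjSub.2 ?_
        have heq : g⁻¹ * (h₀⁻¹ * Quotient.out d * n⁻¹ * s) * g
            = (t⁻¹ * ((Quotient.out d)⁻¹ * x) * h₁⁻¹)⁻¹ := by
          rw [hxeq, hg]; group
        rw [heq]
        exact inv_mem (mul_mem hd2 (inv_mem hh₁))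
      · have heq : h₀⁻¹ * Quotient.out d * n⁻¹ * s = h₀⁻¹ * (Quotient.out d * (n⁻¹ * s)) := by
          group
        rw [heq]
        exact mul_mem (inv_mem hh₀) hd1
    let Ψ : Fx → M₀ ⧸ Kg.subgroupOf M₀ := fun d =>
      QuotientGroup.mk ⟨h₀⁻¹ * Quotient.out (d : G ⧸ H) * n⁻¹ * s, hmd d d.2⟩
    have hinj : Function.Injective Ψ := by
      rintro ⟨d₁, hd₁⟩ ⟨d₂, hd₂⟩ hEq
      have h5 := QuotientGroup.eq.mp hEq
      rw [Subgroup.mem_subgroupOf] at h5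
      have h6 : (h₀⁻¹ * Quotient.out d₁ * n⁻¹ * s)⁻¹ * (h₀⁻¹ * Quotient.out d₂ * n⁻¹ * s) ∈ Kg := by
        exact_mod_cast h5
      rw [hKg, mem_conjSub, inv_inv] at h6
      have h7 : (Quotient.out d₁)⁻¹ * Quotient.out d₂ ∈ H := by
        have heq : (Quotient.out d₁)⁻¹ * Quotient.out d₂
            = n⁻¹ * (s * ((h₀⁻¹ * Quotient.out d₁ * n⁻¹ * s)⁻¹ *
                (h₀⁻¹ * Quotient.out d₂ * n⁻¹ * s)) * s⁻¹) * (n⁻¹)⁻¹ := by group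
        rw [heq]
        exact hHnormN n⁻¹ (inv_mem hn) _ h6
      apply Subtype.ext
      calc d₁ = QuotientGroup.mk (Quotient.out d₁) := (QuotientGroup.out_eq' d₁).symm
        _ = QuotientGroup.mk (Quotient.out d₂) := QuotientGroup.eq.mpr h7
        _ = d₂ := QuotientGroup.out_eq' d₂
    have hsurj : Function.Surjective Ψ := by
      intro q
      obtain ⟨m₀, rfl⟩ := QuotientGroup.mk_surjective q
      obtain ⟨hm₀g, hm₀H⟩ := Subgroup.mem_inf.mp m₀.2
      have hm₀1 : g⁻¹ * (m₀ : G) * g ∈ H := mem_conjSub.1 hm₀g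
      set d : G ⧸ H := QuotientGroup.mk (h₀ * (m₀ : G) * s⁻¹ * n) with hd
      have hz : (h₀ * (m₀ : G) * s⁻¹ * n)⁻¹ * Quotient.out d ∈ H := by
        apply QuotientGroup.eq.mp
        rw [QuotientGroup.out_eq' d, hd]
      have hdF : d ∈ Fx := by
        constructor
        · rw [RCsn]
          have heq : Quotient.out d * (n⁻¹ * s)
              = (h₀ * (m₀ : G)) *
                (s⁻¹ * (n * ((h₀ * (m₀ : G) * s⁻¹ * n)⁻¹ * Quotient.out d) * n⁻¹) * s) := by
            group
          rw [heq]
          exact mul_mem (mul_mem hh₀ hm₀H) (hs1 _ (hHnormN n hn _ hz))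
        · rw [LCt]
          have heq : t⁻¹ * ((Quotient.out d)⁻¹ * x)
              = (t⁻¹ * ((h₀ * (m₀ : G) * s⁻¹ * n)⁻¹ * Quotient.out d)⁻¹ * t) *
                (g⁻¹ * (m₀ : G) * g)⁻¹ * h₁ := by
            rw [hxeq, hg]; group
          rw [heq]
          exact mul_mem (mul_mem (ht1 _ (inv_mem hz)) (inv_mem hm₀1)) hh₁
      refine ⟨⟨d, hdF⟩, ?_⟩
      apply QuotientGroup.eq.mpr
      rw [Subgroup.mem_subgroupOf]
      show ((⟨h₀⁻¹ * Quotient.out d * n⁻¹ * s, hmd d hdF⟩ : M₀) : G)⁻¹ * ((m₀ : M₀) : G) ∈ Kg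
      rw [hKg, mem_conjSub, inv_inv]
      have heq : s * ((h₀⁻¹ * Quotient.out d * n⁻¹ * s)⁻¹ * (m₀ : G)) * s⁻¹
          = n * ((h₀ * (m₀ : G) * s⁻¹ * n)⁻¹ * Quotient.out d)⁻¹ * n⁻¹ := by group
      rw [heq]
      exact hHnormN n hn _ (inv_mem hz)
    have hcard1 : Nat.card Fx = Kg.relIndex M₀ := by
      have := Nat.card_congr (Equiv.ofBijective Ψ ⟨hinj, hsurj⟩)
      rw [this]
      rfl
    -- conjugation: Kg.relIndex M₀ = A.relIndex B'
    have hconjN : ∀ m ∈ N, conjSub H m = H := by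
      intro m hm
      ext y
      rw [mem_conjSub]
      constructor
      · intro hy
        have := hHnormN m hm _ hy
        have heq : m * (m⁻¹ * y * m) * m⁻¹ = y := by group
        rwa [heq] at this
      · intro hy
        have := hHnormN m⁻¹ (inv_mem hm) _ hy
        rwa [inv_inv] at this
    have hc2 : Kg.relIndex M₀ = A.relIndex B' := by
      have hcomap := Subgroup.relIndex_comap (H := Kg) (MulAut.conj g).toMonoidHom B'
      have hc21 : Kg.comap (MulAut.conj g).toMonoidHom = A := by
        rw [comap_conj_eq, hKg, conjSub_conjSub]
        have : g⁻¹ * s⁻¹ = t⁻¹ * n⁻¹ := by rw [hg]; group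
        rw [this, ← conjSub_conjSub, hconjN n⁻¹ (inv_mem hn), hA]
      have hc22 : B'.map (MulAut.conj g).toMonoidHom = M₀ := by
        rw [hB', Subgroup.map_inf _ _ _ (MulAut.conj g).injective]
        show conjSub (conjSub H (t⁻¹ * s)) g ⊓ conjSub H g = M₀
        rw [conjSub_conjSub]
        have h1 : g * (t⁻¹ * s) = s⁻¹ * n * s := by rw [hg]; group
        have h2 : s⁻¹ * n * s ∈ N := by
          have := hNnormal.conj_mem n hn s⁻¹
          rwa [inv_inv] at this
        rw [h1, hconjN _ h2, hM₀, inf_comm]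
      rw [hc21, hc22] at hcomap
      exact hcomap.symm
    -- the index chain A ≤ B' ≤ H
    have hAH : A ≤ H := by
      intro y hy
      rw [hA, mem_conjSub, inv_inv] at hy
      have := ht1 _ hy
      have heq : t⁻¹ * (t * y * t⁻¹) * t = y := by group
      rwa [heq] at this
    have hAB : A ≤ B' := by
      intro y hy
      refine Subgroup.mem_inf.mpr ⟨?_, hAH hy⟩
      rw [hA, mem_conjSub, inv_inv] at hy
      rw [mem_conjSub]
      have := hs1 _ hy
      have heq : s⁻¹ * (t * y * t⁻¹) * s = (t⁻¹ * s)⁻¹ * y * (t⁻¹ * s) := by group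
      rwa [heq] at this
    have hB'H : B' ≤ H := inf_le_right
    have hmul : A.relIndex B' * B'.relIndex H = A.relIndex H :=
      Subgroup.relIndex_mul_relIndex (H := A) (K := B') (L := H) hAB hB'H
    -- identification with the Rcounts
    have hRt : Rcount H t = A.relIndex H := by
      rw [Rcount_eq_relindex, hA]
    have hRst : Rcount H (s⁻¹ * t) = B'.relIndex H := by
      rw [Rcount_eq_relindex]
      have h1 : (s⁻¹ * t)⁻¹ = t⁻¹ * s := by group
      rw [h1, hB', Subgroup.inf_relIndex_right]
    have hmain : Nat.card Fx * Rcount H (s⁻¹ * t) = Rcount H t := by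
      rw [hcard1, hc2, hRst, hRt]
      exact hmul
    -- R(t) ≠ 0
    have hRt0 : Rcount H t ≠ 0 := by
      have hsound : ∀ y z : G, (QuotientGroup.rightRel H) y z →
          (QuotientGroup.mk y⁻¹ : G ⧸ H) = QuotientGroup.mk z⁻¹ := by
        intro y z hr
        have hr' := QuotientGroup.rightRel_apply.mp hr
        apply QuotientGroup.eq.mpr
        rw [inv_inv]
        have heq : y * z⁻¹ = (z * y⁻¹)⁻¹ := by group
        rw [heq]
        exact inv_mem hr'
      let χ : Quotient (QuotientGroup.rightRel H) → G ⧸ H := Quotient.lift _ hsound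
      have hχinj : Function.Injective χ := by
        refine Quotient.ind fun y => Quotient.ind fun z => ?_
        intro hEq
        have h5 : y⁻¹⁻¹ * z⁻¹ ∈ H := QuotientGroup.eq.mp hEq
        apply Quotient.sound
        refine QuotientGroup.rightRel_apply.mpr ?_
        have heq : z * y⁻¹ = (y⁻¹⁻¹ * z⁻¹)⁻¹ := by group
        rw [heq]
        exact inv_mem h5
      have himg : χ '' rightCosetsIn H t ⊆ leftCosetsIn H t⁻¹ := by
        rintro - ⟨-, ⟨y, hy, rfl⟩, rfl⟩
        obtain ⟨k₁, hk1, k₂, hk2, rfl⟩ := mem_dcos_s15.1 hy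
        refine ⟨(k₁ * t * k₂)⁻¹, ?_, rfl⟩
        exact mem_dcos_s15.2 ⟨k₂⁻¹, inv_mem hk2, k₁⁻¹, inv_mem hk1, by group⟩
      have hfin : (rightCosetsIn H t).Finite :=
        Set.Finite.of_finite_image ((hHecke t⁻¹).subset himg) (hχinj.injOn)
      have hne : (rightCosetsIn H t).Nonempty :=
        ⟨Quotient.mk _ t, t, self_mem_dcos, rfl⟩
      exact Nat.card_ne_zero.mpr ⟨hne.to_subtype, hfin.to_subtype⟩
    have hRst0 : Rcount H (s⁻¹ * t) ≠ 0 := by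
      intro h0
      rw [h0, mul_zero] at hmain
      exact hRt0 hmain.symm
    -- final arithmetic
    have hcast : (Rcount H (s⁻¹ * t) : ℂ) ≠ 0 := by exact_mod_cast hRst0
    rw [eq_div_iff hcast]
    exact_mod_cast hmain
end

section
/- In the setting $G = N \rtimes Q$, $Q = S^{-1}S$, $H \trianglelefteq N$ with $sH = HsH$: if $t \in S$ and $n \in N$ with $nH \subseteq tHt^{-1}H$, then in the Hecke algebra $[HnH]\cdot[HtH] = [HtH]$ and $[Ht^{-1}H]\cdot[HnH] = [Ht^{-1}H]$. -/
open scoped Classical Pointwise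

variable {G : Type*} [Group G]

/-- In the Laca–Larsen setting, if `t ∈ S` and `n ∈ N` with `nH ⊆ tHt⁻¹H`, then
`[HnH]⋅[HtH] = [HtH]` and `[Ht⁻¹H]⋅[HnH] = [Ht⁻¹H]` in the Hecke algebra, expressed
pointwise via the convolution formula. -/
theorem stmt16
    (N Q H : Subgroup G) (hNnormal : N.Normal)
    (hsd1 : N ⊓ Q = ⊥) (hsd2 : N ⊔ Q = ⊤)
    (S : Subsemigroup G) (hSQ : (S : Set G) ⊆ (Q : Set G))
    (hOre : ∀ s t : S, ∃ u v : S, (u : G) * s = (v : G) * t)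
    (hQS : ∀ q ∈ Q, ∃ s ∈ S, ∃ t ∈ S, q = s⁻¹ * t)
    (hHN : H ≤ N) (hHnormN : ∀ n ∈ N, ∀ h ∈ H, n * h * n⁻¹ ∈ H)
    (hsH : ∀ s ∈ S, (fun h => s * h) '' (H : Set G) = dcos H s)
    (hHecke : IsHeckePair H)
    (t : G) (htS : t ∈ S) (n : G) (hn : n ∈ N)
    (hnt : n ∈ {g : G | ∃ h ∈ H, ∃ k ∈ H, g = t * h * t⁻¹ * k}) :
    ∀ x : G,
      ((∑ᶠ d : G ⧸ H,
          if Quotient.out d ∈ dcos H n ∧ (Quotient.out d)⁻¹ * x ∈ dcos H t then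
            (1 : ℂ) else 0)
        = (if x ∈ dcos H t then 1 else 0)) ∧
      ((∑ᶠ d : G ⧸ H,
          if Quotient.out d ∈ dcos H t⁻¹ ∧ (Quotient.out d)⁻¹ * x ∈ dcos H n then
            (1 : ℂ) else 0)
        = (if x ∈ dcos H t⁻¹ then 1 else 0)) := by

  -- Extract the data `n = t * h₀ * t⁻¹ * k₀`.
  obtain ⟨h₀, hh₀, k₀, hk₀, hneq⟩ := hnt
  -- For `h ∈ H`, `h * t = t * h'` for some `h' ∈ H` (from `HtH = tH`).
  have hE : ∀ h ∈ H, ∃ h' ∈ H, h * t = t * h' := by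
    intro h hh
    have hmem : h * t ∈ dcos H t := DoubleCoset.mem_doubleCoset.mpr ⟨h, hh, 1, H.one_mem, by group⟩
    rw [← hsH t htS] at hmem
    obtain ⟨h', hh', heq⟩ := hmem
    exact ⟨h', hh', heq.symm⟩
  -- Membership characterizations of the double cosets.
  have hmemT : ∀ g : G, g ∈ dcos H t ↔ t⁻¹ * g ∈ H := by
    intro g
    constructor
    · intro hg
      rw [← hsH t htS] at hg
      obtain ⟨h', hh', heq⟩ := hg
      have : t⁻¹ * g = h' := by rw [← heq]; group
      rw [this]; exact hh'
    · intro hg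
      rw [← hsH t htS]
      exact ⟨t⁻¹ * g, hg, by group⟩
  have hmemTinv : ∀ g : G, g ∈ dcos H t⁻¹ ↔ g * t ∈ H := by
    intro g
    constructor
    · intro hg
      obtain ⟨a, ha, b, hb, heq⟩ := DoubleCoset.mem_doubleCoset.mp hg
      obtain ⟨b', hb', hbt⟩ := hE b hb
      have : g * t = a * b' := by rw [heq]; rw [show a * t⁻¹ * b * t = a * (t⁻¹ * (b * t)) by group, hbt]; group
      rw [this]; exact H.mul_mem ha hb'
    · intro hg
      exact DoubleCoset.mem_doubleCoset.mpr ⟨g * t, hg, 1, H.one_mem, by group⟩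
  -- Conjugation of `H` by `n`.
  have hconj : ∀ g : G, g ∈ H ↔ n * g * n⁻¹ ∈ H := by
    intro g
    constructor
    · exact fun hg => hHnormN n hn g hg
    · intro hg
      have h2 := hHnormN n⁻¹ (N.inv_mem hn) _ hg
      have h3 : n⁻¹ * (n * g * n⁻¹) * n⁻¹⁻¹ = g := by group
      rwa [h3] at h2
  have hmemN : ∀ g : G, g ∈ dcos H n ↔ n⁻¹ * g ∈ H := by
    intro g
    constructor
    · intro hg
      obtain ⟨a, ha, b, hb, heq⟩ := DoubleCoset.mem_doubleCoset.mp hg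
      have ha' : n⁻¹ * a * n ∈ H := by
        have := (hconj (n⁻¹ * a * n)).mpr (by
          have : n * (n⁻¹ * a * n) * n⁻¹ = a := by group
          rwa [this])
        exact this
      have : n⁻¹ * g = (n⁻¹ * a * n) * b := by rw [heq]; group
      rw [this]; exact H.mul_mem ha' hb
    · intro hg
      exact DoubleCoset.mem_doubleCoset.mpr ⟨1, H.one_mem, n⁻¹ * g, hg, by group⟩
  -- The key element: `t⁻¹ * n * t ∈ H`.
  obtain ⟨k', hk', hkt⟩ := hE k₀ hk₀
  have hD : t⁻¹ * n * t ∈ H := by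
    have e : t⁻¹ * n * t = h₀ * k' := by
      rw [hneq, show t⁻¹ * (t * h₀ * t⁻¹ * k₀) * t = h₀ * (t⁻¹ * (k₀ * t)) by group, hkt]
      group
    rw [e]; exact H.mul_mem hh₀ hk'
  have hout : ∀ d : G ⧸ H, (QuotientGroup.mk (Quotient.out d) : G ⧸ H) = d :=
    fun d => Quotient.out_eq' d
  intro x
  constructor
  · -- first identity
    have key : ∀ d : G ⧸ H, d ≠ (QuotientGroup.mk n : G ⧸ H) →
        (if Quotient.out d ∈ dcos H n ∧ (Quotient.out d)⁻¹ * x ∈ dcos H t then (1 : ℂ) else 0) = 0 := by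
      intro d hd
      rw [if_neg]
      rintro ⟨hd1, -⟩
      exact hd ((QuotientGroup.eq.mpr ((hmemN _).mp hd1)).trans (hout d)).symm
    rw [finsum_eq_single _ (QuotientGroup.mk n : G ⧸ H) key]
    set m := Quotient.out (QuotientGroup.mk n : G ⧸ H) with hm
    have hmn : n⁻¹ * m ∈ H := QuotientGroup.eq.mp (hout _).symm
    have hm1 : m ∈ dcos H n := (hmemN m).mpr hmn
    obtain ⟨h', hh', hht⟩ := hE (n⁻¹ * m) hmn
    have hw : (t⁻¹ * n * t) * h' ∈ H := H.mul_mem hD hh'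
    have hmt : m * t = t * ((t⁻¹ * n * t) * h') := by
      have : m * t = n * ((n⁻¹ * m) * t) := by group
      rw [this, hht]; group
    have hmval : m = t * ((t⁻¹ * n * t) * h') * t⁻¹ := by
      rw [← hmt]; group
    have hcond : (m⁻¹ * x ∈ dcos H t) ↔ (x ∈ dcos H t) := by
      rw [hmemT, hmemT,
        show t⁻¹ * (m⁻¹ * x) = ((t⁻¹ * n * t) * h')⁻¹ * (t⁻¹ * x) by rw [hmval]; group,
        H.mul_mem_cancel_left (H.inv_mem hw)]
    by_cases hx : x ∈ dcos H t
    · rw [if_pos ⟨hm1, hcond.mpr hx⟩, if_pos hx]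
    · rw [if_neg (fun h => hx (hcond.mp h.2)), if_neg hx]
  · -- second identity
    have hcond2 : ∀ g : G, (g⁻¹ * x ∈ dcos H n) ↔ (x * n⁻¹)⁻¹ * g ∈ H := by
      intro g
      rw [hmemN]
      constructor
      · intro hg
        have := (hconj _).mp (H.inv_mem hg)
        have e : n * (n⁻¹ * (g⁻¹ * x))⁻¹ * n⁻¹ = (x * n⁻¹)⁻¹ * g := by group
        rwa [e] at this
      · intro hg
        have e : (x * n⁻¹)⁻¹ * g = n * (n⁻¹ * (g⁻¹ * x))⁻¹ * n⁻¹ := by group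
        rw [e] at hg
        have := (hconj _).mpr hg
        rwa [inv_mem_iff] at this
    have key : ∀ d : G ⧸ H, d ≠ (QuotientGroup.mk (x * n⁻¹) : G ⧸ H) →
        (if Quotient.out d ∈ dcos H t⁻¹ ∧ (Quotient.out d)⁻¹ * x ∈ dcos H n then (1 : ℂ) else 0) = 0 := by
      intro d hd
      rw [if_neg]
      rintro ⟨-, hd2⟩
      exact hd ((QuotientGroup.eq.mpr ((hcond2 _).mp hd2)).trans (hout d)).symm
    rw [finsum_eq_single _ (QuotientGroup.mk (x * n⁻¹) : G ⧸ H) key]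
    set m := Quotient.out (QuotientGroup.mk (x * n⁻¹) : G ⧸ H) with hm
    have hmn : (x * n⁻¹)⁻¹ * m ∈ H := QuotientGroup.eq.mp (hout _).symm
    have hm2 : m⁻¹ * x ∈ dcos H n := (hcond2 m).mpr hmn
    obtain ⟨h', hh', hht⟩ := hE ((x * n⁻¹)⁻¹ * m) hmn
    have hw : (t⁻¹ * n * t)⁻¹ * h' ∈ H := H.mul_mem (H.inv_mem hD) hh'
    have hmt : m * t = (x * t) * ((t⁻¹ * n * t)⁻¹ * h') := by
      have e1 : m * t = (x * n⁻¹) * (((x * n⁻¹)⁻¹ * m) * t) := by group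
      rw [e1, hht]; group
    have hcond1 : (m ∈ dcos H t⁻¹) ↔ (x ∈ dcos H t⁻¹) := by
      rw [hmemTinv, hmemTinv, hmt, H.mul_mem_cancel_right hw]
    by_cases hx : x ∈ dcos H t⁻¹
    · rw [if_pos ⟨hcond1.mpr hx, hm2⟩, if_pos hx]
    · rw [if_neg (fun h => hx (hcond1.mp h.1)), if_neg hx]
end

section
/- In the setting $G = N \rtimes Q$, $Q = S^{-1}S$, $H \trianglelefteq N$: the right-coset counting map satisfies $R(s)R(t) = R(ts)$ for all $s, t \in S$. -/
open scoped Classical Pointwise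

variable {G : Type*} [Group G]

lemma Rcount_eq_relindex_s17 (H : Subgroup G) (s : G)
    (hs : (fun h => s * h) '' (H : Set G) = dcos H s) :
    Rcount H s = (H.comap (MulAut.conj s).toMonoidHom).relIndex H := by
  set K := H.comap (MulAut.conj s).toMonoidHom with hK
  have hmem : ∀ x : G, x ∈ K ↔ s * x * s⁻¹ ∈ H := by
    intro x; simp [hK, MulAut.conj_apply]
  -- the map from H-quotient-by-rightRel to rightCosetsIn
  set K' := K.subgroupOf H with hK'
  have hwd : ∀ (h₁ h₂ : H), QuotientGroup.rightRel K' h₁ h₂ →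
      (Quotient.mk (QuotientGroup.rightRel H) (s * h₁) : Quotient (QuotientGroup.rightRel H))
        = Quotient.mk _ (s * h₂) := by
    intro h₁ h₂ hrel
    replace hrel := QuotientGroup.rightRel_apply.mp hrel
    refine Quotient.sound (QuotientGroup.rightRel_apply.mpr ?_)
    have : s * ((h₂ : G) * (h₁ : G)⁻¹) * s⁻¹ ∈ H := (hmem _).1 hrel
    convert this using 1
    group
  have hin : ∀ h : H, (Quotient.mk (QuotientGroup.rightRel H) (s * h)) ∈ rightCosetsIn H s := by
    intro h
    exact ⟨s * h, by rw [← hs]; exact ⟨h, h.2, rfl⟩, rfl⟩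
  let f : Quotient (QuotientGroup.rightRel K') → rightCosetsIn H s :=
    Quotient.lift (fun h : H => (⟨_, hin h⟩ : rightCosetsIn H s)) (fun h₁ h₂ hr => Subtype.ext (hwd h₁ h₂ hr))
  have hbij : Function.Bijective f := by
    constructor
    · rintro ⟨h₁⟩ ⟨h₂⟩ hf
      apply Quotient.sound
      have : (Quotient.mk (QuotientGroup.rightRel H) (s * h₁) : Quotient (QuotientGroup.rightRel H))
          = Quotient.mk _ (s * h₂) := congrArg Subtype.val hf
      have h2 := QuotientGroup.rightRel_apply.mp (Quotient.exact this)
      refine QuotientGroup.rightRel_apply.mpr ?_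
      show ((h₂ * h₁⁻¹ : H) : G) ∈ K
      rw [hmem]
      convert h2 using 1
      push_cast
      group
    · rintro ⟨q, hq⟩
      rw [rightCosetsIn, ← hs] at hq
      obtain ⟨x, ⟨h, hh, rfl⟩, rfl⟩ := hq
      exact ⟨Quotient.mk _ (⟨h, hh⟩ : H), rfl⟩
  have hcard : Rcount H s = Nat.card (Quotient (QuotientGroup.rightRel K')) :=
    (Nat.card_congr (Equiv.ofBijective f hbij)).symm
  rw [hcard, Nat.card_congr (QuotientGroup.quotientRightRelEquivQuotientLeftRel K')]
  rfl

theorem stmt17_aux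
    (H : Subgroup G)
    (S : Subsemigroup G)
    (hsH : ∀ s ∈ S, (fun h => s * h) '' (H : Set G) = dcos H s)
    (s t : G) (hsS : s ∈ S) (htS : t ∈ S) :
    Rcount H s * Rcount H t = Rcount H (t * s) := by
  set f := (MulAut.conj s).toMonoidHom with hf
  have hKle : ∀ u ∈ S, H.comap (MulAut.conj u).toMonoidHom ≤ H := by
    intro u huS x hx
    simp only [Subgroup.mem_comap, MulEquiv.coe_toMonoidHom, MulAut.conj_apply] at hx
    -- u * x * u⁻¹ ∈ H ⇒ x ∈ H, since u⁻¹ H u ⊆ H? need: x = u⁻¹ (uxu⁻¹) u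
    -- From hsH: H * u ⊆ u * H i.e. u⁻¹ h u ∈ H for h ∈ H.
    have key : ∀ h ∈ H, u⁻¹ * h * u ∈ H := by
      intro h hh
      have : h * u ∈ dcos H u := DoubleCoset.mem_doubleCoset.mpr ⟨h, hh, 1, H.one_mem, by group⟩
      rw [← hsH u huS] at this
      obtain ⟨h', hh', heq⟩ := this
      simp only at heq
      have : u⁻¹ * h * u = h' := by rw [mul_assoc, ← heq]; group
      rw [this]; exact hh'
    have := key _ hx
    have hx' : u⁻¹ * (u * x * u⁻¹) * u = x := by group
    rwa [hx'] at this
  have h1 : Rcount H s = (H.comap (MulAut.conj s).toMonoidHom).relIndex H :=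
    Rcount_eq_relindex_s17 H s (hsH s hsS)
  have h2 : Rcount H t = (H.comap (MulAut.conj t).toMonoidHom).relIndex H :=
    Rcount_eq_relindex_s17 H t (hsH t htS)
  have hts : t * s ∈ S := S.mul_mem htS hsS
  have h3 : Rcount H (t * s) = (H.comap (MulAut.conj (t * s)).toMonoidHom).relIndex H :=
    Rcount_eq_relindex_s17 H (t * s) (hsH _ hts)
  set Ks := H.comap (MulAut.conj s).toMonoidHom with hKs
  set Kt := H.comap (MulAut.conj t).toMonoidHom with hKt
  set Kts := H.comap (MulAut.conj (t * s)).toMonoidHom with hKts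
  have hcomp : Kts = Kt.comap f := by
    ext x
    simp [hKts, hKt, hf, MulAut.conj_apply, mul_assoc]
  have hKsf : Ks = H.comap f := rfl
  have hfsurj : Function.Surjective f := (MulAut.conj s).surjective
  have hrel : Kts.relIndex Ks = Kt.relIndex H := by
    rw [hcomp, hKsf, Subgroup.relIndex_comap,
      Subgroup.map_comap_eq_self_of_surjective hfsurj]
  have hle1 : Kts ≤ Ks := by
    rw [hcomp]
    intro x hx
    exact (hKle t htS) hx
  have hle2 : Ks ≤ H := hKle s hsS
  rw [h1, h2, h3, ← hrel, mul_comm]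
  exact Subgroup.relIndex_mul_relIndex Kts Ks H hle1 hle2

/-- In the Laca–Larsen setting, the right-coset counting map satisfies
`R(s)R(t) = R(ts)` for all `s, t ∈ S`. -/
theorem stmt17
    (N Q H : Subgroup G) (hNnormal : N.Normal)
    (hsd1 : N ⊓ Q = ⊥) (hsd2 : N ⊔ Q = ⊤)
    (S : Subsemigroup G) (hSQ : (S : Set G) ⊆ (Q : Set G))
    (hOre : ∀ s t : S, ∃ u v : S, (u : G) * s = (v : G) * t)
    (hQS : ∀ q ∈ Q, ∃ s ∈ S, ∃ t ∈ S, q = s⁻¹ * t)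
    (hHN : H ≤ N) (hHnormN : ∀ n ∈ N, ∀ h ∈ H, n * h * n⁻¹ ∈ H)
    (hsH : ∀ s ∈ S, (fun h => s * h) '' (H : Set G) = dcos H s)
    (hHecke : IsHeckePair H)
    (s t : G) (hsS : s ∈ S) (htS : t ∈ S) :
    Rcount H s * Rcount H t = Rcount H (t * s) := by
  exact stmt17_aux H S hsH s t hsS htS
end
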